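/- arXiv:1102.1340 — 9 statements merged into one kernel-verified Lean document; each statement's English description precedes it below -/
import Mathlib

section
/- Let (F, ⪯) be an ordered system on a finite set N and v a belief function on F. Define v*(f) = min { ⟨f,x⟩ : x ∈ ℝ^N₊, x(F) ≥ v(F) for all F ∈ F } for f ∈ ℝ^N₊. Then v* is nonnegative, positively homogeneous, superadditive on ℝ^N₊, and satisfies v*(1_F) ≥ v(F) for all F ∈ F; moreover, for every functional I: ℝ^N₊ → ℝ₊ with these four properties, v*(f) ≤ I(f) holds for all f ∈ ℝ^N₊. -/
open scoped RealInnerProductSpace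

lemma coord_le_norm' {ι : Type*} [Fintype ι] (x : EuclideanSpace ℝ ι) (j : ι) :
    |x j| ≤ ‖x‖ := by
  calc |x j| = Real.sqrt (‖x j‖ ^ 2) := by
        rw [Real.sqrt_sq_eq_abs, Real.norm_eq_abs, abs_abs]
    _ ≤ Real.sqrt (∑ i, ‖x i‖ ^ 2) :=
        Real.sqrt_le_sqrt (Finset.single_le_sum (f := fun i => ‖x i‖ ^ 2)
          (fun i _ => sq_nonneg _) (Finset.mem_univ j))
    _ = ‖x‖ := (EuclideanSpace.norm_eq x).symm

noncomputable def posCone' (ι : Type*) [Fintype ι] : ProperCone ℝ (EuclideanSpace ℝ ι) where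
  toSubmodule :=
  { carrier := {z | ∀ j, 0 ≤ z j}
    add_mem' := fun hx hy j => add_nonneg (hx j) (hy j)
    zero_mem' := fun j => le_refl 0
    smul_mem' := fun c x hx j => by
      have : (c • x) j = (c : ℝ) * x j := rfl
      rw [this]
      exact mul_nonneg c.2 (hx j) }
  isClosed' := by
    have : {z : EuclideanSpace ℝ ι | ∀ j, 0 ≤ z j} = ⋂ j, {z | 0 ≤ z j} := by
      ext z; simp
    show IsClosed {z : EuclideanSpace ℝ ι | ∀ j, 0 ≤ z j}
    rw [this]
    exact isClosed_iInter fun j =>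
      isClosed_le continuous_const (EuclideanSpace.proj j).continuous

lemma mem_posCone' {ι : Type*} [Fintype ι] {z : EuclideanSpace ℝ ι} :
    z ∈ posCone' ι ↔ ∀ j, 0 ≤ z j := Iff.rfl

theorem part5 {N : Type*} [Fintype N] [DecidableEq N] {m : ℕ}
    (Fi : Fin m → Finset N) (hFne : ∀ i, (Fi i).Nonempty) (v : Fin m → ℝ)
    (vstar : (N → ℝ) → ℝ)
    (hvstar : ∀ f : N → ℝ, (∀ a, 0 ≤ f a) →
      IsLeast {r : ℝ | ∃ x : N → ℝ, (∀ a, 0 ≤ x a) ∧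
        (∀ i, v i ≤ ∑ a ∈ Fi i, x a) ∧ r = ∑ a, f a * x a} (vstar f))
    (I : (N → ℝ) → ℝ)
    (hI0 : ∀ f : N → ℝ, (∀ a, 0 ≤ f a) → 0 ≤ I f)
    (hIhom : ∀ f : N → ℝ, (∀ a, 0 ≤ f a) → ∀ c : ℝ, 0 ≤ c →
        I (fun a => c * f a) = c * I f)
    (hIsuper : ∀ f g : N → ℝ, (∀ a, 0 ≤ f a) → (∀ a, 0 ≤ g a) → I f + I g ≤ I (f + g))
    (hIind : ∀ i, v i ≤ I (fun a => if a ∈ Fi i then 1 else 0))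
    (f : N → ℝ) (hf : ∀ a, 0 ≤ f a) : vstar f ≤ I f := by
  classical
  refine le_of_forall_pos_lt_add fun ε hε => ?_
  set t : ℝ := vstar f - ε with ht
  -- the linear map
  let G₀ : EuclideanSpace ℝ (N ⊕ Option (Fin m)) →ₗ[ℝ] EuclideanSpace ℝ (Option (Fin m)) :=
  { toFun := fun z => WithLp.toLp 2 (fun j => j.elim
      (-(∑ a, f a * z (Sum.inl a)) - z (Sum.inr none))
      (fun i => (∑ a ∈ Fi i, z (Sum.inl a)) - z (Sum.inr (some i))))
    map_add' := by
      intro z w; ext j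
      cases j <;>
        simp [PiLp.add_apply, Finset.sum_add_distrib, mul_add] <;> ring
    map_smul' := by
      intro c z; ext j
      have hz : ∀ u, (c • z) u = c * z u := fun u => rfl
      cases j with
      | none =>
        show -(∑ a, f a * (c • z) (Sum.inl a)) - (c • z) (Sum.inr none)
            = c * (-(∑ a, f a * z (Sum.inl a)) - z (Sum.inr none))
        simp only [hz]
        rw [show (∑ a, f a * (c * z (Sum.inl a))) = c * ∑ a, f a * z (Sum.inl a) by
          rw [Finset.mul_sum]; exact Finset.sum_congr rfl fun a _ => by ring]
        ring
      | some i =>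
        show (∑ a ∈ Fi i, (c • z) (Sum.inl a)) - (c • z) (Sum.inr (some i))
            = c * ((∑ a ∈ Fi i, z (Sum.inl a)) - z (Sum.inr (some i)))
        simp only [hz]
        rw [← Finset.mul_sum]
        ring }
  let G : EuclideanSpace ℝ (N ⊕ Option (Fin m)) →L[ℝ] EuclideanSpace ℝ (Option (Fin m)) :=
    LinearMap.toContinuousLinearMap G₀
  have hGsome : ∀ (z : EuclideanSpace ℝ (N ⊕ Option (Fin m))) (i : Fin m),
      G z (some i) = (∑ a ∈ Fi i, z (Sum.inl a)) - z (Sum.inr (some i)) := fun z i => rfl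
  have hGnone : ∀ (z : EuclideanSpace ℝ (N ⊕ Option (Fin m))),
      G z none = -(∑ a, f a * z (Sum.inl a)) - z (Sum.inr none) := fun z => rfl
  let b : EuclideanSpace ℝ (Option (Fin m)) := WithLp.toLp 2 (fun j => j.elim (-t) v)
  have hbnone : b none = -t := rfl
  have hbsome : ∀ i, b (some i) = v i := fun i => rfl
  let K := posCone' (N ⊕ Option (Fin m))
  have hlb : ∀ x : N → ℝ, (∀ a, 0 ≤ x a) → (∀ i, v i ≤ ∑ a ∈ Fi i, x a) →
      vstar f ≤ ∑ a, f a * x a := fun x h1 h2 => (hvstar f hf).2 ⟨x, h1, h2, rfl⟩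
  set Sf := ∑ a, f a with hSf
  have hSf0 : 0 ≤ Sf := Finset.sum_nonneg fun a _ => hf a
  set δ := ε / (2 * (1 + Sf)) with hδ
  have hδpos : 0 < δ := by positivity
  have hδval : δ * (1 + Sf) = ε / 2 := by
    rw [hδ]; field_simp
  -- b is not in the closed cone image
  have hb : b ∉ K.map G := by
    intro hmem
    rw [ProperCone.mem_map, PointedCone.mem_closure] at hmem
    obtain ⟨p, hp, hdist⟩ := Metric.mem_closure_iff.mp hmem δ hδpos
    obtain ⟨z, hz, rfl⟩ := PointedCone.mem_map.mp (SetLike.mem_coe.mp hp)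
    have hz' : ∀ j, 0 ≤ z j := mem_posCone'.mp (ProperCone.mem_toPointedCone.mp hz)
    have hco : ∀ j, |b j - G z j| < δ := by
      intro j
      calc |b j - G z j| = |(b - G z) j| := by rw [PiLp.sub_apply]
        _ ≤ ‖b - G z‖ := coord_le_norm' _ j
        _ = dist b (G z) := (dist_eq_norm _ _).symm
        _ < δ := hdist
    have hfeas : ∀ i, v i - δ ≤ ∑ a ∈ Fi i, z (Sum.inl a) := by
      intro i
      have h1 := hco (some i)
      rw [hbsome, hGsome] at h1
      have h2 := hz' (Sum.inr (some i))
      have := (abs_lt.mp h1).2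
      linarith
    have hcost : ∑ a, f a * z (Sum.inl a) ≤ t + δ := by
      have h1 := hco none
      rw [hbnone, hGnone] at h1
      have h2 := hz' (Sum.inr none)
      have := (abs_lt.mp h1).2
      linarith
    have hx'feas : ∀ i, v i ≤ ∑ a ∈ Fi i, (z (Sum.inl a) + δ) := by
      intro i
      have hcard : (1:ℝ) ≤ (Fi i).card := by
        exact_mod_cast Finset.card_pos.mpr (hFne i)
      have hsum : ∑ a ∈ Fi i, (z (Sum.inl a) + δ)
          = (∑ a ∈ Fi i, z (Sum.inl a)) + (Fi i).card * δ := by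
        rw [Finset.sum_add_distrib, Finset.sum_const, nsmul_eq_mul]
      rw [hsum]
      nlinarith [hfeas i, hδpos.le]
    have hle := hlb (fun a => z (Sum.inl a) + δ) (fun a => add_nonneg (hz' _) hδpos.le) hx'feas
    have hsum2 : ∑ a, f a * (z (Sum.inl a) + δ) = (∑ a, f a * z (Sum.inl a)) + δ * Sf := by
      rw [hSf, Finset.mul_sum, ← Finset.sum_add_distrib]
      exact Finset.sum_congr rfl fun a _ => by ring
    rw [hsum2] at hle
    have : vstar f ≤ t + δ + δ * Sf := by linarith
    have h3 : δ + δ * Sf = ε / 2 := by linarith [hδval]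
    rw [ht] at this
    linarith
  -- separation
  obtain ⟨y, hydual, hyb⟩ := ProperCone.hyperplane_separation_of_notMem K hb
  have hkey : ∀ z : EuclideanSpace ℝ (N ⊕ Option (Fin m)), (∀ j, 0 ≤ z j) →
      0 ≤ ∑ j, G z j * y j := by
    intro z hz0
    have h1 := ProperCone.mem_innerDual.mp hydual (mem_posCone'.mpr hz0)
    rw [ContinuousLinearMap.adjoint_inner_right] at h1
    rw [PiLp.inner_apply] at h1
    simpa [RCLike.inner_apply, conj_trivial, mul_comm] using h1
  have hsum : ∀ z : EuclideanSpace ℝ (N ⊕ Option (Fin m)),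
      ∑ j, G z j * y j
        = (-(∑ a, f a * z (Sum.inl a)) - z (Sum.inr none)) * y none
          + ∑ i, ((∑ a ∈ Fi i, z (Sum.inl a)) - z (Sum.inr (some i))) * y (some i) := by
    intro z
    rw [Fintype.sum_option]
    simp only [hGsome, hGnone]
  have hsingle_mem : ∀ (j0 : N ⊕ Option (Fin m)) (j : N ⊕ Option (Fin m)),
      (0:ℝ) ≤ (EuclideanSpace.single j0 (1:ℝ)) j := by
    intro j0 j; rw [EuclideanSpace.single_apply]; positivity
  have hy1 : ∀ i : Fin m, 0 ≤ -y (some i) := by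
    intro i
    have h := hkey (EuclideanSpace.single (Sum.inr (some i)) 1) (hsingle_mem _)
    rw [hsum] at h
    simpa [EuclideanSpace.single_apply] using h
  have hy2 : 0 ≤ -y none := by
    have h := hkey (EuclideanSpace.single (Sum.inr none) 1) (hsingle_mem _)
    rw [hsum] at h
    simpa [EuclideanSpace.single_apply] using h
  have hy3 : ∀ a : N, ∑ i, (if a ∈ Fi i then 1 else 0) * (-y (some i)) ≤ f a * (-y none) := by
    intro a
    have h := hkey (EuclideanSpace.single (Sum.inl a) 1) (hsingle_mem _)
    rw [hsum] at h
    simp only [EuclideanSpace.single_apply] at h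
    simp only [Sum.inl.injEq, reduceCtorEq, if_false, mul_ite, mul_one, mul_zero,
      Finset.sum_ite_eq, Finset.sum_ite_eq', Finset.mem_univ, if_true, sub_zero] at h
    have e : ∑ i, (if a ∈ Fi i then (1:ℝ) else 0) * -y (some i)
        = -(∑ i, (if a ∈ Fi i then (1:ℝ) else 0) * y (some i)) := by
      rw [← Finset.sum_neg_distrib]
      exact Finset.sum_congr rfl fun i _ => by ring
    rw [e]
    linarith
  have hval : (-y none) * t < ∑ i, (-y (some i)) * v i := by
    have h := hyb
    rw [PiLp.inner_apply] at h
    simp only [RCLike.inner_apply, conj_trivial, Fintype.sum_option, hbnone, hbsome] at h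
    have e : ∑ i, (-y (some i)) * v i = -(∑ i, y (some i) * v i) := by
      rw [← Finset.sum_neg_distrib]
      exact Finset.sum_congr rfl fun i _ => by ring
    rw [e]
    nlinarith [h]
  by_cases hμ : 0 < -y none
  case neg =>
    exfalso
    have hμ0 : -y none = 0 := le_antisymm (not_lt.mp hμ) hy2
    have hz0 : ∀ i, -y (some i) = 0 := by
      intro i
      obtain ⟨a, ha⟩ := hFne i
      have h := hy3 a
      rw [hμ0, mul_zero] at h
      have hterms : ∀ j ∈ Finset.univ, (0:ℝ) ≤ (if a ∈ Fi j then (1:ℝ) else 0) * -y (some j) :=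
        fun j _ => mul_nonneg (by positivity) (hy1 j)
      have hzero : ∀ j ∈ Finset.univ, (if a ∈ Fi j then (1:ℝ) else 0) * -y (some j) = 0 :=
        (Finset.sum_eq_zero_iff_of_nonneg hterms).mp (le_antisymm h (Finset.sum_nonneg hterms))
      have := hzero i (Finset.mem_univ i)
      rw [if_pos ha, one_mul] at this
      exact this
    have : ∑ i, (-y (some i)) * v i = 0 := Finset.sum_eq_zero fun i _ => by rw [hz0 i, zero_mul]
    rw [this, hμ0, zero_mul] at hval
    exact lt_irrefl 0 hval
  case pos =>
  set q : Fin m → ℝ := fun i => (-y (some i)) / (-y none) with hqdef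
  have hq0 : ∀ i, 0 ≤ q i := fun i => div_nonneg (hy1 i) hy2
  have hqf : ∀ a, ∑ i, q i * (if a ∈ Fi i then (1:ℝ) else 0) ≤ f a := by
    intro a
    have e : ∑ i, q i * (if a ∈ Fi i then (1:ℝ) else 0)
        = (∑ i, (if a ∈ Fi i then (1:ℝ) else 0) * -y (some i)) / (-y none) := by
      rw [Finset.sum_div]
      exact Finset.sum_congr rfl fun i _ => by rw [hqdef]; ring
    rw [e, div_le_iff₀ hμ]
    exact hy3 a
  have hqv : t < ∑ i, q i * v i := by
    have e : ∑ i, q i * v i = (∑ i, (-y (some i)) * v i) / (-y none) := by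
      rw [Finset.sum_div]
      exact Finset.sum_congr rfl fun i _ => by rw [hqdef]; ring
    rw [e, lt_div_iff₀ hμ]
    nlinarith [hval]
  have hkey2 : ∀ s : Finset (Fin m),
      ∑ i ∈ s, q i * v i ≤ I (fun a => ∑ i ∈ s, q i * (if a ∈ Fi i then (1:ℝ) else 0)) := by
    intro s
    refine Finset.induction_on s ?_ (fun i s hni ih => ?_)
    · simp only [Finset.sum_empty]
      exact hI0 _ (fun a => le_refl 0)
    · have hrw : (fun a => ∑ j ∈ insert i s, q j * (if a ∈ Fi j then (1:ℝ) else 0))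
          = (fun a => q i * (if a ∈ Fi i then (1:ℝ) else 0))
            + (fun a => ∑ j ∈ s, q j * (if a ∈ Fi j then (1:ℝ) else 0)) := by
        funext a
        simp [Finset.sum_insert hni]
      rw [Finset.sum_insert hni, hrw]
      have hχ0 : ∀ a : N, (0:ℝ) ≤ if a ∈ Fi i then 1 else 0 := fun a => by positivity
      have h1 : q i * v i ≤ I (fun a => q i * (if a ∈ Fi i then (1:ℝ) else 0)) := by
        rw [hIhom _ hχ0 (q i) (hq0 i)]
        exact mul_le_mul_of_nonneg_left (hIind i) (hq0 i)
      have h2 := hIsuper (fun a => q i * (if a ∈ Fi i then (1:ℝ) else 0))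
        (fun a => ∑ j ∈ s, q j * (if a ∈ Fi j then (1:ℝ) else 0))
        (fun a => mul_nonneg (hq0 i) (hχ0 a))
        (fun a => Finset.sum_nonneg fun j _ => mul_nonneg (hq0 j) (by positivity))
      linarith
  have hSnn : ∀ a, 0 ≤ ∑ i, q i * (if a ∈ Fi i then (1:ℝ) else 0) :=
    fun a => Finset.sum_nonneg fun j _ => mul_nonneg (hq0 j) (by positivity)
  have hh0 : ∀ a, 0 ≤ f a - ∑ i, q i * (if a ∈ Fi i then (1:ℝ) else 0) :=
    fun a => sub_nonneg.mpr (hqf a)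
  have h3 := hIsuper _ _ hSnn hh0
  have hfeq : (fun a => ∑ i, q i * (if a ∈ Fi i then (1:ℝ) else 0))
      + (fun a => f a - ∑ i, q i * (if a ∈ Fi i then (1:ℝ) else 0)) = f := by
    funext a
    simp only [Pi.add_apply]
    ring
  rw [hfeq] at h3
  have h4 := hI0 _ hh0
  have h5 := hkey2 Finset.univ
  rw [ht] at hqv
  linarith


section Parts
variable {N : Type*} [Fintype N] [DecidableEq N] {m : ℕ}
  (Fi : Fin m → Finset N) (v : Fin m → ℝ) (vstar : (N → ℝ) → ℝ)

theorem parts14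
    (hvstar : ∀ f : N → ℝ, (∀ a, 0 ≤ f a) →
      IsLeast {r : ℝ | ∃ x : N → ℝ, (∀ a, 0 ≤ x a) ∧
        (∀ i, v i ≤ ∑ a ∈ Fi i, x a) ∧ r = ∑ a, f a * x a} (vstar f)) :
    (∀ f : N → ℝ, (∀ a, 0 ≤ f a) → 0 ≤ vstar f) ∧
    (∀ f : N → ℝ, (∀ a, 0 ≤ f a) → ∀ c : ℝ, 0 ≤ c →
        vstar (fun a => c * f a) = c * vstar f) ∧
    (∀ f g : N → ℝ, (∀ a, 0 ≤ f a) → (∀ a, 0 ≤ g a) →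
        vstar f + vstar g ≤ vstar (f + g)) ∧
    (∀ i, v i ≤ vstar (fun a => if a ∈ Fi i then 1 else 0)) := by
  refine ⟨?_, ?_, ?_, ?_⟩
  · intro f hf
    obtain ⟨x, hx0, -, hr⟩ := (hvstar f hf).1
    rw [hr]
    exact Finset.sum_nonneg fun a _ => mul_nonneg (hf a) (hx0 a)
  · intro f hf c hc
    have hcf : ∀ a, 0 ≤ c * f a := fun a => mul_nonneg hc (hf a)
    apply le_antisymm
    · obtain ⟨x, hx0, hxf, hr⟩ := (hvstar f hf).1
      refine (hvstar _ hcf).2 ⟨x, hx0, hxf, ?_⟩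
      rw [hr, Finset.mul_sum]
      exact Finset.sum_congr rfl fun a _ => by ring
    · obtain ⟨x, hx0, hxf, hr⟩ := (hvstar _ hcf).1
      have hmem : (∑ a, f a * x a) ∈ {r : ℝ | ∃ x : N → ℝ, (∀ a, 0 ≤ x a) ∧
        (∀ i, v i ≤ ∑ a ∈ Fi i, x a) ∧ r = ∑ a, f a * x a} := ⟨x, hx0, hxf, rfl⟩
      have := (hvstar f hf).2 hmem
      calc c * vstar f ≤ c * ∑ a, f a * x a := mul_le_mul_of_nonneg_left this hc
        _ = vstar (fun a => c * f a) := by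
            rw [hr, Finset.mul_sum]; exact Finset.sum_congr rfl fun a _ => by ring
  · intro f g hf hg
    have hfg : ∀ a, 0 ≤ (f + g) a := fun a => add_nonneg (hf a) (hg a)
    obtain ⟨x, hx0, hxf, hr⟩ := (hvstar _ hfg).1
    have h1 : vstar f ≤ ∑ a, f a * x a := (hvstar f hf).2 ⟨x, hx0, hxf, rfl⟩
    have h2 : vstar g ≤ ∑ a, g a * x a := (hvstar g hg).2 ⟨x, hx0, hxf, rfl⟩
    have : vstar (f + g) = ∑ a, f a * x a + ∑ a, g a * x a := by
      rw [hr, ← Finset.sum_add_distrib]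
      exact Finset.sum_congr rfl fun a _ => by simp [Pi.add_apply]; ring
    linarith
  · intro i
    have hind : ∀ a : N, (0:ℝ) ≤ if a ∈ Fi i then 1 else 0 := fun a => by positivity
    obtain ⟨x, hx0, hxf, hr⟩ := (hvstar _ hind).1
    have heq : vstar (fun a => if a ∈ Fi i then 1 else 0) = ∑ a ∈ Fi i, x a := by
      rw [hr]
      simp only [ite_mul, one_mul, zero_mul]
      rw [Finset.sum_ite_mem, Finset.univ_inter]
    rw [heq]
    exact hxf i
end Parts



/-- v* is the least upper integral of a belief function v. -/
theorem stmt_3 {N : Type*} [Fintype N] [DecidableEq N] (m : ℕ)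
    (Fi : Fin m → Finset N) (hFinj : Function.Injective Fi)
    (hFne : ∀ i, (Fi i).Nonempty) (hFcov : ∀ x : N, ∃ i, x ∈ Fi i)
    (le : Fin m → Fin m → Prop) [DecidableRel le]
    (hrefl : ∀ i, le i i)
    (hanti : ∀ i j, le i j → le j i → i = j)
    (htrans : ∀ i j k, le i j → le j k → le i k)
    (hindex : ∀ i j, le i j → j ≤ i)
    (v : Fin m → ℝ)
    (hbelief : ∃ w : Fin m → ℝ, (∀ i, 0 ≤ w i) ∧
        ∀ i, v i = ∑ j ∈ Finset.univ.filter (fun j => le j i), w j)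
    (vstar : (N → ℝ) → ℝ)
    (hvstar : ∀ f : N → ℝ, (∀ a, 0 ≤ f a) →
      IsLeast {r : ℝ | ∃ x : N → ℝ, (∀ a, 0 ≤ x a) ∧
        (∀ i, v i ≤ ∑ a ∈ Fi i, x a) ∧ r = ∑ a, f a * x a} (vstar f)) :
    (∀ f : N → ℝ, (∀ a, 0 ≤ f a) → 0 ≤ vstar f) ∧
    (∀ f : N → ℝ, (∀ a, 0 ≤ f a) → ∀ c : ℝ, 0 ≤ c →
        vstar (fun a => c * f a) = c * vstar f) ∧
    (∀ f g : N → ℝ, (∀ a, 0 ≤ f a) → (∀ a, 0 ≤ g a) →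
        vstar f + vstar g ≤ vstar (f + g)) ∧
    (∀ i, v i ≤ vstar (fun a => if a ∈ Fi i then 1 else 0)) ∧
    (∀ I : (N → ℝ) → ℝ,
        (∀ f : N → ℝ, (∀ a, 0 ≤ f a) → 0 ≤ I f) →
        (∀ f : N → ℝ, (∀ a, 0 ≤ f a) → ∀ c : ℝ, 0 ≤ c →
            I (fun a => c * f a) = c * I f) →
        (∀ f g : N → ℝ, (∀ a, 0 ≤ f a) → (∀ a, 0 ≤ g a) → I f + I g ≤ I (f + g)) →
        (∀ i, v i ≤ I (fun a => if a ∈ Fi i then 1 else 0)) →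
        ∀ f : N → ℝ, (∀ a, 0 ≤ f a) → vstar f ≤ I f) := by
  obtain ⟨h1, h2, h3, h4⟩ := parts14 Fi v vstar hvstar
  exact ⟨h1, h2, h3, h4, fun I a b c d f hf => part5 Fi hFne v vstar hvstar I a b c d f hf⟩
end

section
/- A family F of nonempty subsets of a finite set N is weakly union-closed (F ∩ G ≠ ∅ implies F ∪ G ∈ F for all F, G ∈ F) if and only if for every G ⊆ N the maximal elements of F(G) = {F ∈ F : F ⊆ G} are pairwise disjoint. -/
lemma exists_max_mem {N : Type*} [DecidableEq N] (Fam : Finset (Finset N))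
    (G F : Finset N) (hF : F ∈ Fam) (hFG : F ⊆ G) :
    ∃ M ∈ Fam, M ⊆ G ∧ F ⊆ M ∧ ∀ F' ∈ Fam, F' ⊆ G → M ⊆ F' → M = F' := by
  classical
  set s := Fam.filter (fun X => X ⊆ G ∧ F ⊆ X) with hs
  have hFs : F ∈ s := by simp [hs, hF, hFG]
  obtain ⟨M, hM, hmax⟩ : ∃ M ∈ s, ∀ x ∈ s, ¬ M < x := by
    obtain ⟨M, hM⟩ := Finset.exists_maximal ⟨F, hFs⟩
    exact ⟨M, hM.1, fun x hx hlt => hlt.not_ge (hM.2 hx hlt.le)⟩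
  simp only [hs, Finset.mem_filter] at hM
  refine ⟨M, hM.1, hM.2.1, hM.2.2, fun F' hF' hF'G hMF' => ?_⟩
  by_contra hne
  exact hmax F' (by simp [hs, hF', hF'G, hM.2.2.trans hMF'])
    (lt_of_le_of_ne hMF' hne)

/-- F is weakly union-closed iff for all G the maximal members of
F(G) = {F ∈ F : F ⊆ G} are pairwise disjoint. -/
theorem stmt_9 {N : Type*} [Fintype N] [DecidableEq N]
    (Fam : Finset (Finset N)) (hne : ∀ F ∈ Fam, F.Nonempty) :
    (∀ F ∈ Fam, ∀ G ∈ Fam, (F ∩ G).Nonempty → F ∪ G ∈ Fam) ↔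
    (∀ G : Finset N, ∀ F1 ∈ Fam, ∀ F2 ∈ Fam,
        F1 ⊆ G → F2 ⊆ G →
        (∀ F' ∈ Fam, F' ⊆ G → F1 ⊆ F' → F1 = F') →
        (∀ F' ∈ Fam, F' ⊆ G → F2 ⊆ F' → F2 = F') →
        F1 ≠ F2 → F1 ∩ F2 = ∅) := by
  constructor
  · intro h G F1 h1 F2 h2 h1G h2G hmax1 hmax2 hne12
    by_contra hcap
    have hcapne : (F1 ∩ F2).Nonempty := Finset.nonempty_iff_ne_empty.mpr hcap
    have hU : F1 ∪ F2 ∈ Fam := h F1 h1 F2 h2 hcapne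
    have hUG : F1 ∪ F2 ⊆ G := Finset.union_subset h1G h2G
    have e1 := hmax1 _ hU hUG Finset.subset_union_left
    have e2 := hmax2 _ hU hUG Finset.subset_union_right
    exact hne12 (e1.trans e2.symm)
  · intro h F hF G hG hcap
    set U := F ∪ G with hU
    obtain ⟨M1, hM1, hM1U, hFM1, hmax1⟩ :=
      exists_max_mem Fam U F hF Finset.subset_union_left
    obtain ⟨M2, hM2, hM2U, hGM2, hmax2⟩ :=
      exists_max_mem Fam U G hG Finset.subset_union_right
    have hMcap : M1 ∩ M2 ≠ ∅ := by
      obtain ⟨x, hx⟩ := hcap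
      simp only [Finset.mem_inter] at hx
      exact Finset.nonempty_iff_ne_empty.mp ⟨x, Finset.mem_inter.mpr ⟨hFM1 hx.1, hGM2 hx.2⟩⟩
    have hM12 : M1 = M2 := by
      by_contra hne12
      exact hMcap (h U M1 hM1 M2 hM2 hM1U hM2U hmax1 hmax2 hne12)
    have : U = M1 := le_antisymm (Finset.union_subset hFM1 (hM12 ▸ hGM2)) hM1U
    show U ∈ Fam
    rw [this]
    exact hM1
end

section
/- Let F be a weakly union-closed family of nonempty subsets of a finite set N covering N, ordered by containment, and let v: F → ℝ be any valuation with representation v = Σ_{F∈F} β_F ζ^F. Then for every f ∈ ℝ^N₊, the Choquet integral satisfies ∫_F f dv = Σ_{F∈F} β_F · min_{i∈F} f_i. -/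
open scoped Classical

open Finset

private lemma inf'_add_const' {N : Type*} (F : Finset N) (h : F.Nonempty) (g : N → ℝ) (c : ℝ) :
    F.inf' h (fun a => g a + c) = F.inf' h g + c := by
  apply le_antisymm
  · obtain ⟨i, hi, hgi⟩ := F.exists_mem_eq_inf' h g
    calc F.inf' h (fun a => g a + c) ≤ g i + c := Finset.inf'_le _ hi
    _ = F.inf' h g + c := by rw [hgi]
  · apply Finset.le_inf'
    intro b hb
    exact add_le_add_left (Finset.inf'_le _ hb) c

private lemma inf'_zero_of_mem {N : Type*} (F : Finset N) (h : F.Nonempty) (g : N → ℝ)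
    (hg : ∀ a, 0 ≤ g a) {a : N} (ha : a ∈ F) (hga : g a = 0) :
    F.inf' h g = 0 := by
  apply le_antisymm
  · calc F.inf' h g ≤ g a := Finset.inf'_le _ ha
    _ = 0 := hga
  · exact Finset.le_inf' h _ fun b _ => hg b

private lemma cover_bound {N : Type*} [Fintype N] [DecidableEq N]
    (Fam : Finset (Finset N)) (hne : ∀ F ∈ Fam, F.Nonempty)
    (hwuc : ∀ F ∈ Fam, ∀ G ∈ Fam, (F ∩ G).Nonempty → F ∪ G ∈ Fam)
    (α : Finset N → ℝ) (hα : ∀ F, 0 ≤ α F)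
    (x : N → ℝ) (hx : ∀ a, 0 ≤ x a)
    (hcon : ∀ G ∈ Fam, (∑ F ∈ Fam.filter (· ⊆ G), α F) ≤ ∑ a ∈ G, x a)
    (P : Finset N) :
    ∑ F ∈ Fam.filter (· ⊆ P), α F ≤ ∑ a ∈ P, x a := by
  set M := Fam.filter (fun H => H ⊆ P ∧ ∀ G ∈ Fam, G ⊆ P → H ⊆ G → H = G) with hMdef
  have hMFam : ∀ H ∈ M, H ∈ Fam ∧ H ⊆ P := by
    intro H hH
    rw [hMdef, mem_filter] at hH
    exact ⟨hH.1, hH.2.1⟩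
  -- every F in Fam with F ⊆ P lies in some maximal H ∈ M
  have hmax : ∀ F ∈ Fam, F ⊆ P → ∃ H ∈ M, F ⊆ H := by
    intro F hF hFP
    obtain ⟨H, hH, hHmax⟩ := Finset.exists_max_image
      (Fam.filter fun G => F ⊆ G ∧ G ⊆ P) Finset.card
      ⟨F, by simp [hF, hFP]⟩
    rw [mem_filter] at hH
    refine ⟨H, ?_, hH.2.1⟩
    rw [hMdef, mem_filter]
    refine ⟨hH.1, hH.2.2, ?_⟩
    intro G hG hGP hHG
    have hGmem : G ∈ Fam.filter fun G => F ⊆ G ∧ G ⊆ P := by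
      rw [mem_filter]; exact ⟨hG, hH.2.1.trans hHG, hGP⟩
    exact Finset.eq_of_subset_of_card_le hHG (hHmax G hGmem)
  -- members of M are pairwise disjoint
  have hdisj : ∀ H ∈ M, ∀ H' ∈ M, H ≠ H' → Disjoint H H' := by
    intro H hH H' hH' hne'
    by_contra hnd
    obtain ⟨hHFam, hHP⟩ := hMFam H hH
    obtain ⟨hH'Fam, hH'P⟩ := hMFam H' hH'
    have hint : (H ∩ H').Nonempty := Finset.not_disjoint_iff_nonempty_inter.mp hnd
    have hu : H ∪ H' ∈ Fam := hwuc H hHFam H' hH'Fam hint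
    have huP : H ∪ H' ⊆ P := Finset.union_subset hHP hH'P
    rw [hMdef, mem_filter] at hH hH'
    have h1 : H = H ∪ H' := hH.2.2 _ hu huP Finset.subset_union_left
    have h2 : H' = H ∪ H' := hH'.2.2 _ hu huP Finset.subset_union_right
    exact hne' (h1.trans h2.symm)
  -- the filter families over M are pairwise disjoint
  have hdisj2 : Set.PairwiseDisjoint (↑M) (fun H => Fam.filter (· ⊆ H)) := by
    intro H hH H' hH' hne'
    simp only [Function.onFun]
    rw [Finset.disjoint_left]
    intro F hF hF'
    rw [mem_filter] at hF hF'
    have hd := hdisj H hH H' hH' hne'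
    obtain ⟨a, ha⟩ := hne F hF.1
    exact (Finset.disjoint_left.mp hd (hF.2 ha)) (hF'.2 ha)
  have hsub : Fam.filter (· ⊆ P) ⊆ M.biUnion (fun H => Fam.filter (· ⊆ H)) := by
    intro F hF
    rw [mem_filter] at hF
    obtain ⟨H, hH, hFH⟩ := hmax F hF.1 hF.2
    exact Finset.mem_biUnion.mpr ⟨H, hH, mem_filter.mpr ⟨hF.1, hFH⟩⟩
  have hdisjM : Set.PairwiseDisjoint (↑M) (id : Finset N → Finset N) := by
    intro H hH H' hH' hne'
    simp only [Function.onFun, id]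
    exact hdisj H hH H' hH' hne'
  calc ∑ F ∈ Fam.filter (· ⊆ P), α F
      ≤ ∑ F ∈ M.biUnion (fun H => Fam.filter (· ⊆ H)), α F :=
        Finset.sum_le_sum_of_subset_of_nonneg hsub (fun F _ _ => hα F)
    _ = ∑ H ∈ M, ∑ F ∈ Fam.filter (· ⊆ H), α F := Finset.sum_biUnion hdisj2
    _ ≤ ∑ H ∈ M, ∑ a ∈ H, x a :=
        Finset.sum_le_sum fun H hH => hcon H (hMFam H hH).1
    _ = ∑ a ∈ M.biUnion id, x a := (Finset.sum_biUnion hdisjM).symm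
    _ ≤ ∑ a ∈ P, x a := by
        apply Finset.sum_le_sum_of_subset_of_nonneg
        · intro a ha
          obtain ⟨H, hH, haH⟩ := Finset.mem_biUnion.mp ha
          exact (hMFam H hH).2 haH
        · intro a _ _; exact hx a

private lemma lower_bound {N : Type*} [Fintype N] [DecidableEq N]
    (Fam : Finset (Finset N)) (hne : ∀ F ∈ Fam, F.Nonempty)
    (hwuc : ∀ F ∈ Fam, ∀ G ∈ Fam, (F ∩ G).Nonempty → F ∪ G ∈ Fam)
    (α : Finset N → ℝ) (hα : ∀ F, 0 ≤ α F) :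
    ∀ n : ℕ, ∀ f : N → ℝ, (univ.filter fun a => 0 < f a).card ≤ n → (∀ a, 0 ≤ f a) →
      ∀ x : N → ℝ, (∀ a, 0 ≤ x a) →
      (∀ G ∈ Fam, (∑ F ∈ Fam.filter (· ⊆ G), α F) ≤ ∑ a ∈ G, x a) →
      (∑ F ∈ Fam.attach, α F.1 * F.1.inf' (hne F.1 F.2) f) ≤ ∑ a, f a * x a := by
  intro n
  induction n with
  | zero =>
    intro f hcard hf x hx hcon
    have hf0 : ∀ a, f a = 0 := by
      intro a
      by_contra h
      have hmem : a ∈ univ.filter fun a => 0 < f a :=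
        mem_filter.mpr ⟨mem_univ a, lt_of_le_of_ne (hf a) (Ne.symm h)⟩
      have hemp := Finset.card_eq_zero.mp (Nat.le_zero.mp hcard)
      rw [hemp] at hmem
      exact absurd hmem (Finset.notMem_empty a)
    have hL : ∑ F ∈ Fam.attach, α F.1 * F.1.inf' (hne F.1 F.2) f = 0 := by
      apply Finset.sum_eq_zero
      intro F _
      have hFn := hne F.1 F.2
      obtain ⟨a, ha⟩ := hFn
      rw [inf'_zero_of_mem _ _ f hf ha (hf0 a), mul_zero]
    rw [hL]
    exact Finset.sum_nonneg fun a _ => mul_nonneg (hf a) (hx a)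
  | succ n ih =>
    intro f hcard hf x hx hcon
    set P := univ.filter fun a => 0 < f a with hPdef
    by_cases hP : P.Nonempty
    · -- m = min of f over its support
      obtain ⟨a₀, ha₀, hma₀⟩ := P.exists_mem_eq_inf' hP f
      set m := P.inf' hP f with hm
      have hmpos : 0 < m := by
        rw [hma₀]
        exact (mem_filter.mp ha₀).2
      have hmle : ∀ a ∈ P, m ≤ f a := fun a ha => Finset.inf'_le _ ha
      set f' := fun a => f a - (if a ∈ P then m else 0) with hf'def
      have hf' : ∀ a, 0 ≤ f' a := by
        intro a
        by_cases h : a ∈ P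
        · simp only [hf'def, if_pos h]
          linarith [hmle a h]
        · simp only [hf'def, if_neg h]
          simpa using hf a
      have hzero_out : ∀ a, a ∉ P → f a = 0 := by
        intro a ha
        have hnot : ¬ 0 < f a := by
          intro h; exact ha (mem_filter.mpr ⟨mem_univ a, h⟩)
        linarith [hf a]
      have hf'zero_out : ∀ a, a ∉ P → f' a = 0 := by
        intro a ha
        simp [hf'def, ha, hzero_out a ha]
      have hsupp : (univ.filter fun a => 0 < f' a) ⊆ P.erase a₀ := by
        intro a ha
        rw [mem_filter] at ha
        have haP : a ∈ P := by
          by_contra h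
          have := hf'zero_out a h
          linarith [ha.2]
        refine Finset.mem_erase.mpr ⟨?_, haP⟩
        rintro rfl
        have : f' a = 0 := by simp [hf'def, haP, ← hma₀]
        linarith [ha.2]
      have hcard' : (univ.filter fun a => 0 < f' a).card ≤ n := by
        have h1 := Finset.card_le_card hsupp
        have h2 : (P.erase a₀).card = P.card - 1 := Finset.card_erase_of_mem ha₀
        have h3 : 0 < P.card := Finset.card_pos.mpr hP
        omega
      have hIH := ih f' hcard' hf' x hx hcon
      -- per-F decomposition of min
      have hinf : ∀ F : {y // y ∈ Fam}, F.1.inf' (hne F.1 F.2) f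
          = F.1.inf' (hne F.1 F.2) f' + (if F.1 ⊆ P then m else 0) := by
        intro F
        by_cases hFP : F.1 ⊆ P
        · rw [if_pos hFP]
          have hcg : F.1.inf' (hne F.1 F.2) f = F.1.inf' (hne F.1 F.2) (fun a => f' a + m) := by
            apply Finset.inf'_congr (hne F.1 F.2) rfl
            intro a ha
            simp [hf'def, hFP ha]
          rw [hcg, inf'_add_const']
        · rw [if_neg hFP, add_zero]
          obtain ⟨a, haF, haP⟩ := Finset.not_subset.mp hFP
          rw [inf'_zero_of_mem _ _ f hf haF (hzero_out a haP),
            inf'_zero_of_mem _ _ f' hf' haF (hf'zero_out a haP)]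
      -- LHS decomposition
      have hLHS : ∑ F ∈ Fam.attach, α F.1 * F.1.inf' (hne F.1 F.2) f
          = (∑ F ∈ Fam.attach, α F.1 * F.1.inf' (hne F.1 F.2) f')
            + m * ∑ F ∈ Fam.filter (· ⊆ P), α F := by
        have hterm : ∀ F ∈ Fam.attach, α F.1 * F.1.inf' (hne F.1 F.2) f
            = α F.1 * F.1.inf' (hne F.1 F.2) f' + (if F.1 ⊆ P then m * α F.1 else 0) := by
          intro F _
          rw [hinf F]
          by_cases h : F.1 ⊆ P
          · rw [if_pos h, if_pos h]; ring
          · rw [if_neg h, if_neg h]; ring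
        rw [Finset.sum_congr rfl hterm, Finset.sum_add_distrib]
        congr 1
        calc ∑ F ∈ Fam.attach, (if F.1 ⊆ P then m * α F.1 else 0)
            = ∑ F ∈ Fam, (if F ⊆ P then m * α F else 0) :=
              Finset.sum_attach Fam (fun F => if F ⊆ P then m * α F else 0)
          _ = ∑ F ∈ Fam.filter (· ⊆ P), m * α F := (Finset.sum_filter _ _).symm
          _ = m * ∑ F ∈ Fam.filter (· ⊆ P), α F := by rw [Finset.mul_sum]
      -- RHS decomposition
      have hRHS : ∑ a, f a * x a = (∑ a, f' a * x a) + m * ∑ a ∈ P, x a := by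
        have hterm : ∀ a ∈ (univ : Finset N), f a * x a
            = f' a * x a + (if a ∈ P then m * x a else 0) := by
          intro a _
          by_cases h : a ∈ P
          · simp only [hf'def, if_pos h]; ring
          · simp only [hf'def, if_neg h]; ring
        rw [Finset.sum_congr rfl hterm, Finset.sum_add_distrib]
        congr 1
        calc ∑ a, (if a ∈ P then m * x a else 0)
            = ∑ a ∈ univ.filter (· ∈ P), m * x a := (Finset.sum_filter _ _).symm
          _ = ∑ a ∈ P, m * x a := by
              congr 1
              ext a
              simp
          _ = m * ∑ a ∈ P, x a := by rw [Finset.mul_sum]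
      have hcb := cover_bound Fam hne hwuc α hα x hx hcon P
      have hcb' := mul_le_mul_of_nonneg_left hcb (le_of_lt hmpos)
      rw [hLHS, hRHS]
      linarith
    · -- f = 0 everywhere
      have hf0 : ∀ a, f a = 0 := by
        intro a
        by_contra h
        exact hP ⟨a, mem_filter.mpr ⟨mem_univ a, lt_of_le_of_ne (hf a) (Ne.symm h)⟩⟩
      have hL : ∑ F ∈ Fam.attach, α F.1 * F.1.inf' (hne F.1 F.2) f = 0 := by
        apply Finset.sum_eq_zero
        intro F _
        have hFn := hne F.1 F.2
        obtain ⟨a, ha⟩ := hFn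
        rw [inf'_zero_of_mem _ _ f hf ha (hf0 a), mul_zero]
      rw [hL]
      exact Finset.sum_nonneg fun a _ => mul_nonneg (hf a) (hx a)

private lemma choquet_belief {N : Type*} [Fintype N] [DecidableEq N]
    (Fam : Finset (Finset N)) (hne : ∀ F ∈ Fam, F.Nonempty)
    (hwuc : ∀ F ∈ Fam, ∀ G ∈ Fam, (F ∩ G).Nonempty → F ∪ G ∈ Fam)
    (α : Finset N → ℝ) (hα : ∀ F, 0 ≤ α F)
    (f : N → ℝ) (hf : ∀ a, 0 ≤ f a) :
    IsLeast {r : ℝ | ∃ x : N → ℝ, (∀ a, 0 ≤ x a) ∧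
        (∀ G ∈ Fam, (∑ F ∈ Fam.filter (· ⊆ G), α F) ≤ ∑ a ∈ G, x a) ∧
        r = ∑ a, f a * x a}
      (∑ F ∈ Fam.attach, α F.1 * F.1.inf' (hne F.1 F.2) f) := by
  constructor
  · -- membership: the measure concentrated on minimizers is feasible and optimal
    have hex : ∀ F : {y // y ∈ Fam}, ∃ i, i ∈ F.1 ∧ F.1.inf' (hne F.1 F.2) f = f i := by
      intro F
      exact F.1.exists_mem_eq_inf' (hne F.1 F.2) f
    choose mn hmn1 hmn2 using hex
    refine ⟨fun a => ∑ F ∈ Fam.attach, if a = mn F then α F.1 else 0, ?_, ?_, ?_⟩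
    · intro a
      apply Finset.sum_nonneg
      intro F _
      split_ifs
      · exact hα F.1
      · exact le_rfl
    · intro G hG
      calc ∑ F ∈ Fam.filter (· ⊆ G), α F
          = ∑ F ∈ Fam, (if F ⊆ G then α F else 0) := Finset.sum_filter _ _
        _ = ∑ F ∈ Fam.attach, (if F.1 ⊆ G then α F.1 else 0) :=
            (Finset.sum_attach Fam (fun F => if F ⊆ G then α F else 0)).symm
        _ ≤ ∑ F ∈ Fam.attach, (if mn F ∈ G then α F.1 else 0) := by
            apply Finset.sum_le_sum
            intro F _
            by_cases h : F.1 ⊆ G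
            · rw [if_pos h, if_pos (h (hmn1 F))]
            · rw [if_neg h]
              split_ifs
              · exact hα F.1
              · exact le_rfl
        _ = ∑ F ∈ Fam.attach, ∑ a ∈ G, (if a = mn F then α F.1 else 0) := by
            apply Finset.sum_congr rfl
            intro F _
            rw [Finset.sum_ite_eq' G (mn F) (fun _ => α F.1)]
        _ = ∑ a ∈ G, ∑ F ∈ Fam.attach, (if a = mn F then α F.1 else 0) := Finset.sum_comm
    · calc ∑ F ∈ Fam.attach, α F.1 * F.1.inf' (hne F.1 F.2) f
          = ∑ F ∈ Fam.attach, f (mn F) * α F.1 := by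
            apply Finset.sum_congr rfl
            intro F _
            rw [hmn2 F]; ring
        _ = ∑ F ∈ Fam.attach, ∑ a, (if a = mn F then f a * α F.1 else 0) := by
            apply Finset.sum_congr rfl
            intro F _
            rw [Finset.sum_ite_eq' univ (mn F) (fun a => f a * α F.1), if_pos (mem_univ _)]
        _ = ∑ a, ∑ F ∈ Fam.attach, (if a = mn F then f a * α F.1 else 0) := Finset.sum_comm
        _ = ∑ a, f a * ∑ F ∈ Fam.attach, (if a = mn F then α F.1 else 0) := by
            apply Finset.sum_congr rfl
            intro a _
            rw [Finset.mul_sum]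
            apply Finset.sum_congr rfl
            intro F _
            split_ifs <;> simp
  · rintro r ⟨x, hx, hconx, rfl⟩
    exact lower_bound Fam hne hwuc α hα
      ((univ.filter fun a => 0 < f a).card) f le_rfl hf x hx hconx

private lemma max_sub_max_neg (b : ℝ) : max b 0 - max (-b) 0 = b := by
  rcases le_total 0 b with h | h
  · rw [max_eq_left h, max_eq_right (neg_nonpos.mpr h), sub_zero]
  · rw [max_eq_right h, max_eq_left (neg_nonneg.mpr h), zero_sub, neg_neg]

/-- on a weakly union-closed family, the Choquet integral of a general
valuation v = Σ β_F ζ^F (defined via the positive/negative parts v⁺, v⁻) equals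
Σ_F β_F · min_{i∈F} f_i. -/
theorem stmt_10 {N : Type*} [Fintype N] [DecidableEq N]
    (Fam : Finset (Finset N)) (hne : ∀ F ∈ Fam, F.Nonempty)
    (hcov : ∀ x : N, ∃ F ∈ Fam, x ∈ F)
    (hwuc : ∀ F ∈ Fam, ∀ G ∈ Fam, (F ∩ G).Nonempty → F ∪ G ∈ Fam)
    (β : Finset N → ℝ) (f : N → ℝ) (hf : ∀ a, 0 ≤ f a)
    (Ip Im : ℝ)
    (hIp : IsLeast {r : ℝ | ∃ x : N → ℝ, (∀ a, 0 ≤ x a) ∧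
        (∀ G ∈ Fam, (∑ F ∈ Fam.filter (fun F => F ⊆ G ∧ 0 ≤ β F), β F) ≤ ∑ a ∈ G, x a) ∧
        r = ∑ a, f a * x a} Ip)
    (hIm : IsLeast {r : ℝ | ∃ x : N → ℝ, (∀ a, 0 ≤ x a) ∧
        (∀ G ∈ Fam, (∑ F ∈ Fam.filter (fun F => F ⊆ G ∧ β F < 0), -β F) ≤ ∑ a ∈ G, x a) ∧
        r = ∑ a, f a * x a} Im) :
    Ip - Im = ∑ F ∈ Fam.attach, β F.1 * F.1.inf' (hne F.1 F.2) f := by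
  set αp := fun F => max (β F) 0 with hαpdef
  set αm := fun F => max (-β F) 0 with hαmdef
  have hαp : ∀ F, 0 ≤ αp F := fun F => le_max_right _ _
  have hαm : ∀ F, 0 ≤ αm F := fun F => le_max_right _ _
  have hsum_p : ∀ G : Finset N, (∑ F ∈ Fam.filter (fun F => F ⊆ G ∧ 0 ≤ β F), β F)
      = ∑ F ∈ Fam.filter (· ⊆ G), αp F := by
    intro G
    calc ∑ F ∈ Fam.filter (fun F => F ⊆ G ∧ 0 ≤ β F), β F
        = ∑ F ∈ Fam, (if F ⊆ G ∧ 0 ≤ β F then β F else 0) := Finset.sum_filter _ _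
      _ = ∑ F ∈ Fam, (if F ⊆ G then αp F else 0) := by
          apply Finset.sum_congr rfl
          intro F _
          by_cases h1 : F ⊆ G
          · by_cases h2 : 0 ≤ β F
            · rw [if_pos ⟨h1, h2⟩, if_pos h1, hαpdef]
              exact (max_eq_left h2).symm
            · rw [if_neg (by tauto), if_pos h1, hαpdef]
              exact (max_eq_right (le_of_not_ge h2)).symm
          · rw [if_neg (by tauto), if_neg h1]
      _ = ∑ F ∈ Fam.filter (· ⊆ G), αp F := (Finset.sum_filter _ _).symm
  have hsum_m : ∀ G : Finset N, (∑ F ∈ Fam.filter (fun F => F ⊆ G ∧ β F < 0), -β F)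
      = ∑ F ∈ Fam.filter (· ⊆ G), αm F := by
    intro G
    calc ∑ F ∈ Fam.filter (fun F => F ⊆ G ∧ β F < 0), -β F
        = ∑ F ∈ Fam, (if F ⊆ G ∧ β F < 0 then -β F else 0) := Finset.sum_filter _ _
      _ = ∑ F ∈ Fam, (if F ⊆ G then αm F else 0) := by
          apply Finset.sum_congr rfl
          intro F _
          by_cases h1 : F ⊆ G
          · by_cases h2 : β F < 0
            · rw [if_pos ⟨h1, h2⟩, if_pos h1, hαmdef]
              exact (max_eq_left (neg_nonneg.mpr (le_of_lt h2))).symm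
            · rw [if_neg (by tauto), if_pos h1, hαmdef]
              exact (max_eq_right (neg_nonpos.mpr (le_of_not_gt h2))).symm
          · rw [if_neg (by tauto), if_neg h1]
      _ = ∑ F ∈ Fam.filter (· ⊆ G), αm F := (Finset.sum_filter _ _).symm
  have hIp' : IsLeast {r : ℝ | ∃ x : N → ℝ, (∀ a, 0 ≤ x a) ∧
      (∀ G ∈ Fam, (∑ F ∈ Fam.filter (· ⊆ G), αp F) ≤ ∑ a ∈ G, x a) ∧
      r = ∑ a, f a * x a} Ip := by
    have hset : {r : ℝ | ∃ x : N → ℝ, (∀ a, 0 ≤ x a) ∧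
        (∀ G ∈ Fam, (∑ F ∈ Fam.filter (fun F => F ⊆ G ∧ 0 ≤ β F), β F) ≤ ∑ a ∈ G, x a) ∧
        r = ∑ a, f a * x a} = {r : ℝ | ∃ x : N → ℝ, (∀ a, 0 ≤ x a) ∧
        (∀ G ∈ Fam, (∑ F ∈ Fam.filter (· ⊆ G), αp F) ≤ ∑ a ∈ G, x a) ∧
        r = ∑ a, f a * x a} := by
      ext r
      constructor
      · rintro ⟨x, h1, h2, h3⟩
        exact ⟨x, h1, fun G hG => by rw [← hsum_p G]; exact h2 G hG, h3⟩
      · rintro ⟨x, h1, h2, h3⟩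
        exact ⟨x, h1, fun G hG => by rw [hsum_p G]; exact h2 G hG, h3⟩
    rw [← hset]
    exact hIp
  have hIm' : IsLeast {r : ℝ | ∃ x : N → ℝ, (∀ a, 0 ≤ x a) ∧
      (∀ G ∈ Fam, (∑ F ∈ Fam.filter (· ⊆ G), αm F) ≤ ∑ a ∈ G, x a) ∧
      r = ∑ a, f a * x a} Im := by
    have hset : {r : ℝ | ∃ x : N → ℝ, (∀ a, 0 ≤ x a) ∧
        (∀ G ∈ Fam, (∑ F ∈ Fam.filter (fun F => F ⊆ G ∧ β F < 0), -β F) ≤ ∑ a ∈ G, x a) ∧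
        r = ∑ a, f a * x a} = {r : ℝ | ∃ x : N → ℝ, (∀ a, 0 ≤ x a) ∧
        (∀ G ∈ Fam, (∑ F ∈ Fam.filter (· ⊆ G), αm F) ≤ ∑ a ∈ G, x a) ∧
        r = ∑ a, f a * x a} := by
      ext r
      constructor
      · rintro ⟨x, h1, h2, h3⟩
        exact ⟨x, h1, fun G hG => by rw [← hsum_m G]; exact h2 G hG, h3⟩
      · rintro ⟨x, h1, h2, h3⟩
        exact ⟨x, h1, fun G hG => by rw [hsum_m G]; exact h2 G hG, h3⟩
    rw [← hset]
    exact hIm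
  have eIp : Ip = ∑ F ∈ Fam.attach, αp F.1 * F.1.inf' (hne F.1 F.2) f :=
    hIp'.unique (choquet_belief Fam hne hwuc αp hαp f hf)
  have eIm : Im = ∑ F ∈ Fam.attach, αm F.1 * F.1.inf' (hne F.1 F.2) f :=
    hIm'.unique (choquet_belief Fam hne hwuc αm hαm f hf)
  rw [eIp, eIm, ← Finset.sum_sub_distrib]
  apply Finset.sum_congr rfl
  intro F _
  rw [← sub_mul, hαpdef, hαmdef]
  rw [max_sub_max_neg (β F.1)]
end

section
/- Let F be a weakly union-closed family of nonempty subsets of a finite set N covering N, and let v: F → ℝ be a valuation with extension v̂: 2^N → ℝ. Then for every S ⊆ N, v̂(S) = Σ { v(F) : F maximal in F(S) }, where F(S) = {F ∈ F : F ⊆ S}. -/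
open scoped Classical

/-- for a weakly union-closed family, the extension v̂ satisfies
v̂(S) = Σ { v(F) : F maximal in F(S) }. -/
theorem stmt_11 {N : Type*} [Fintype N] [DecidableEq N]
    (Fam : Finset (Finset N)) (hne : ∀ F ∈ Fam, F.Nonempty)
    (hcov : ∀ x : N, ∃ F ∈ Fam, x ∈ F)
    (hwuc : ∀ F ∈ Fam, ∀ G ∈ Fam, (F ∩ G).Nonempty → F ∪ G ∈ Fam)
    (v β : Finset N → ℝ)
    (hrep : ∀ G ∈ Fam, v G = ∑ F ∈ Fam.filter (fun F => F ⊆ G), β F)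
    (S : Finset N) :
    (∑ F ∈ Fam.filter (fun F => F ⊆ S), β F) =
      ∑ F ∈ Fam.filter (fun F => F ⊆ S ∧ ∀ F' ∈ Fam, F' ⊆ S → F ⊆ F' → F = F'), v F := by
  classical
  set Max := Fam.filter (fun F => F ⊆ S ∧ ∀ F' ∈ Fam, F' ⊆ S → F ⊆ F' → F = F') with hMax
  have key : Fam.filter (fun F => F ⊆ S) =
      Max.biUnion (fun M => Fam.filter (fun F => F ⊆ M)) := by
    ext F
    simp only [Finset.mem_biUnion, Finset.mem_filter, hMax]
    constructor
    · rintro ⟨hF, hFS⟩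
      obtain ⟨M, hM, hmax⟩ : ∃ M ∈ Fam.filter (fun G => F ⊆ G ∧ G ⊆ S),
          ∀ x ∈ Fam.filter (fun G => F ⊆ G ∧ G ⊆ S), ¬ M < x := by
        obtain ⟨M, hM, hmax⟩ := Finset.exists_maximal
          (s := Fam.filter (fun G => F ⊆ G ∧ G ⊆ S)) ⟨F, by simp [hF, hFS]⟩
        exact ⟨M, hM, fun x hx hlt => lt_irrefl _ (lt_of_lt_of_le hlt (hmax hx hlt.le))⟩
      simp only [Finset.mem_filter] at hM
      refine ⟨M, ⟨hM.1, hM.2.2, ?_⟩, hF, hM.2.1⟩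
      intro F' hF' hF'S hMF'
      by_contra hne'
      exact hmax F' (Finset.mem_filter.mpr ⟨hF', hM.2.1.trans hMF', hF'S⟩)
        (lt_of_le_of_ne hMF' hne')
    · rintro ⟨M, ⟨hM, hMS, _⟩, hF, hFM⟩
      exact ⟨hF, hFM.trans hMS⟩
  rw [key, Finset.sum_biUnion]
  · apply Finset.sum_congr rfl
    intro M hM
    simp only [hMax, Finset.mem_filter] at hM
    rw [hrep M hM.1]
  · intro M hM M' hM' hMM'
    simp only [Finset.mem_coe, hMax, Finset.mem_filter] at hM hM'
    simp only [Function.onFun]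
    rw [Finset.disjoint_left]
    intro F hF hF'
    simp only [Finset.mem_filter] at hF hF'
    obtain ⟨x, hx⟩ := hne F hF.1
    have hint : (M ∩ M').Nonempty := ⟨x, Finset.mem_inter.mpr ⟨hF.2 hx, hF'.2 hx⟩⟩
    have hu := hwuc M hM.1 M' hM'.1 hint
    have huS : M ∪ M' ⊆ S := Finset.union_subset hM.2.1 hM'.2.1
    have h1 := hM.2.2 (M ∪ M') hu huS Finset.subset_union_left
    have h2 := hM'.2.2 (M ∪ M') hu huS Finset.subset_union_right
    exact hMM' (h1.trans h2.symm)
end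

section
/- Let F be a weakly union-closed family of nonempty subsets of a finite set N covering N. Then there exists a capacity v on (F, ⊆) (a nonnegative valuation that is monotone with respect to inclusion) whose extension v̂ to 2^N, given by v̂(S) = Σ { v(F) : F maximal in F(S) }, is not monotone on (2^N, ⊆). In particular, with N = {1,2,3,4,5} and F = {12345, 1234, 2345, 1345, 124, 234, 345, 12, 35, 2, 5}, the capacity v with v(N) = v(12) = v(35) = 1 and suitable values elsewhere satisfies v̂({1,2,3,5}) = 2 > 1 = v̂(N). -/
open scoped Classical

/-- The extension of a valuation on a weakly union-closed family: the sum of v over the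
maximal members of F(S) = {F ∈ Fam : F ⊆ S}. -/
noncomputable def vhat {N : Type*} [DecidableEq N]
    (Fam : Finset (Finset N)) (v : Finset N → ℝ) (S : Finset N) : ℝ :=
  ∑ F ∈ Fam.filter (fun F => F ⊆ S ∧ ∀ F' ∈ Fam, F' ⊆ S → F ⊆ F' → F = F'), v F

def Fam12 : Finset (Finset (Fin 5)) :=
  { {0,1,2,3,4}, {0,1,2,3}, {1,2,3,4}, {0,2,3,4}, {0,1,3}, {1,2,3}, {2,3,4},
    {0,1}, {2,4}, {1}, {4} }

lemma h01 : vhat Fam12 (fun _ => 1) {0, 1, 2, 4} = 2 := by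
  rw [vhat, Finset.filter_congr_decidable]
  rw [show Finset.filter _ Fam12 = ({({0,1} : Finset (Fin 5)), {2,4}} : Finset (Finset (Fin 5))) from by decide]
  rw [Finset.sum_const, show ({({0,1}:Finset (Fin 5)), {2,4}} : Finset (Finset (Fin 5))).card = 2 from by decide]
  norm_num

lemma h02 : vhat Fam12 (fun _ => 1) Finset.univ = 1 := by
  rw [vhat, Finset.filter_congr_decidable]
  rw [show Finset.filter _ Fam12 = ({({0,1,2,3,4} : Finset (Fin 5))} : Finset (Finset (Fin 5))) from by decide]
  simp

/-- there is a weakly union-closed covering family on N = {1,...,5} and a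
capacity v on it whose extension v̂ is not monotone: with F as in the paper and
v(N) = v(12) = v(35) = 1 one gets v̂(1235) = 2 > 1 = v̂(N).
(Elements are coded 1,2,3,4,5 ↦ 0,1,2,3,4, so 12 = {0,1}, 35 = {2,4}, 1235 = {0,1,2,4}.) -/
theorem stmt_12 :
    ∃ (Fam : Finset (Finset (Fin 5))) (v : Finset (Fin 5) → ℝ),
      (∀ F ∈ Fam, F.Nonempty) ∧
      (∀ x : Fin 5, ∃ F ∈ Fam, x ∈ F) ∧
      (∀ F ∈ Fam, ∀ G ∈ Fam, (F ∩ G).Nonempty → F ∪ G ∈ Fam) ∧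
      (∀ F ∈ Fam, 0 ≤ v F) ∧
      (∀ F ∈ Fam, ∀ G ∈ Fam, F ⊆ G → v F ≤ v G) ∧
      v Finset.univ = 1 ∧ v {0, 1} = 1 ∧ v {2, 4} = 1 ∧
      vhat Fam v {0, 1, 2, 4} = 2 ∧ vhat Fam v Finset.univ = 1 ∧
      ¬ (∀ S T : Finset (Fin 5), S ⊆ T → vhat Fam v S ≤ vhat Fam v T) := by
  refine ⟨Fam12, fun _ => 1, by decide, by decide, by decide,
    fun F _ => by norm_num, fun F _ G _ _ => by norm_num, rfl, rfl, rfl, h01, h02, fun h => ?_⟩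
  have := h {0,1,2,4} Finset.univ (Finset.subset_univ _)
  rw [h01, h02] at this
  linarith
end

section
/- Let (F, ⪯) be a consecutive ordered system on a finite set N, i.e., F ⪯ G ⪯ H implies F ∩ H ⊆ G. Then for all F, G ∈ F and all L, U ∈ F with L, U ⊆ F ∪ G and L ⪯ F, G ⪯ U, the pointwise inequality 1_L + 1_U ≤ 1_F + 1_G holds on N. -/
/-- in a consecutive ordered system, for L ⪯ F,G ⪯ U with
L, U ⊆ F ∪ G, the indicator inequality 1_L + 1_U ≤ 1_F + 1_G holds pointwise. -/
theorem stmt_15 {N : Type*} [Fintype N] [DecidableEq N]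
    (Fam : Finset (Finset N)) (hne : ∀ F ∈ Fam, F.Nonempty)
    (hcov : ∀ x : N, ∃ F ∈ Fam, x ∈ F)
    (le : Finset N → Finset N → Prop)
    (hrefl : ∀ F ∈ Fam, le F F)
    (hanti : ∀ F ∈ Fam, ∀ G ∈ Fam, le F G → le G F → F = G)
    (htrans : ∀ F ∈ Fam, ∀ G ∈ Fam, ∀ H ∈ Fam, le F G → le G H → le F H)
    (hconsec : ∀ F ∈ Fam, ∀ G ∈ Fam, ∀ H ∈ Fam, le F G → le G H → F ∩ H ⊆ G)
    (F G L U : Finset N) (hF : F ∈ Fam) (hG : G ∈ Fam) (hL : L ∈ Fam) (hU : U ∈ Fam)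
    (hLsub : L ⊆ F ∪ G) (hUsub : U ⊆ F ∪ G)
    (hLF : le L F) (hLG : le L G) (hFU : le F U) (hGU : le G U) :
    ∀ a : N,
      (if a ∈ L then (1 : ℝ) else 0) + (if a ∈ U then (1 : ℝ) else 0) ≤
        (if a ∈ F then (1 : ℝ) else 0) + (if a ∈ G then (1 : ℝ) else 0) := by
  intro a
  by_cases hl : a ∈ L <;> by_cases hu : a ∈ U
  · have haF : a ∈ F := hconsec L hL F hF U hU hLF hFU (Finset.mem_inter.2 ⟨hl, hu⟩)
    have haG : a ∈ G := hconsec L hL G hG U hU hLG hGU (Finset.mem_inter.2 ⟨hl, hu⟩)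
    simp [hl, hu, haF, haG]
  · rcases Finset.mem_union.1 (hLsub hl) with h | h <;> simp [hl, hu, h] <;> positivity
  · rcases Finset.mem_union.1 (hUsub hu) with h | h <;> simp [hl, hu, h] <;> positivity
  · simp [hl, hu]; positivity
end

section
/- Let F be a family of nonempty subsets of a finite set N covering N that is closed under arbitrary unions of its members, and let v be a capacity on (F, ⊆). If the Choquet functional f ↦ ∫_F f dv is superadditive on ℝ^N₊, then v is supermodular: for all F, G ∈ F, v(F ∪ G) + v(F ∧ G) ≥ v(F) + v(G), where F ∧ G is the union of all members of F contained in F ∩ G (with v(∅) = 0 if no such member exists). -/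
open scoped Classical

/-- The Choquet integral on a family via the Möbius representation:
∫ f dv = Σ_{F ∈ Fam} β_F · min_{i∈F} f_i. -/
noncomputable def cho {N : Type*} (Fam : Finset (Finset N))
    (hne : ∀ F ∈ Fam, F.Nonempty) (β : Finset N → ℝ) (f : N → ℝ) : ℝ :=
  ∑ F ∈ Fam.attach, β F.1 * F.1.inf' (hne F.1 F.2) f

lemma cho_indicator {N : Type*} [DecidableEq N] (Fam : Finset (Finset N))
    (hne : ∀ F ∈ Fam, F.Nonempty) (β : Finset N → ℝ) (S : Finset N) :
    cho Fam hne β (fun a => if a ∈ S then (1:ℝ) else 0)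
      = ∑ F ∈ Fam.filter (fun F => F ⊆ S), β F := by
  unfold cho
  rw [Finset.sum_filter, ← Finset.sum_attach Fam (fun F => if F ⊆ S then β F else 0)]
  apply Finset.sum_congr rfl
  intro F _
  by_cases h : F.1 ⊆ S
  · rw [if_pos h]
    have h1 : F.1.inf' (hne F.1 F.2) (fun a => if a ∈ S then (1:ℝ) else 0) = 1 := by
      rw [Finset.inf'_congr _ rfl (g := fun _ => (1:ℝ)) (fun a ha => by simp [h ha])]
      exact Finset.inf'_const _ _
    rw [h1, mul_one]
  · rw [if_neg h]
    obtain ⟨a, haF, haS⟩ := Finset.not_subset.mp h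
    have h1 : F.1.inf' (hne F.1 F.2) (fun a => if a ∈ S then (1:ℝ) else 0) = 0 := by
      apply le_antisymm
      · have := Finset.inf'_le (fun a => if a ∈ S then (1:ℝ) else 0) haF
        exact le_trans this (by simp [haS])
      · apply Finset.le_inf'
        intro b _
        by_cases hb : b ∈ S <;> simp [hb]
    rw [h1, mul_zero]

lemma cho_sum_indicator {N : Type*} [DecidableEq N] (Fam : Finset (Finset N))
    (hne : ∀ F ∈ Fam, F.Nonempty) (β : Finset N → ℝ) (F G : Finset N) :
    cho Fam hne β ((fun a => if a ∈ F then (1:ℝ) else 0) + (fun a => if a ∈ G then (1:ℝ) else 0))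
      = (∑ H ∈ Fam.filter (fun H => H ⊆ F ∪ G), β H)
        + ∑ H ∈ Fam.filter (fun H => H ⊆ F ∩ G), β H := by
  unfold cho
  rw [Finset.sum_filter, Finset.sum_filter, ← Finset.sum_add_distrib,
    ← Finset.sum_attach Fam (fun H => (if H ⊆ F ∪ G then β H else 0) + if H ⊆ F ∩ G then β H else 0)]
  apply Finset.sum_congr rfl
  intro H _
  have key : H.1.inf' (hne H.1 H.2)
      ((fun a => if a ∈ F then (1:ℝ) else 0) + (fun a => if a ∈ G then (1:ℝ) else 0))
      = (if H.1 ⊆ F ∪ G then (1:ℝ) else 0) + (if H.1 ⊆ F ∩ G then (1:ℝ) else 0) := by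
    by_cases h2 : H.1 ⊆ F ∩ G
    · have hF : H.1 ⊆ F := h2.trans Finset.inter_subset_left
      have hG : H.1 ⊆ G := h2.trans Finset.inter_subset_right
      have h1 : H.1 ⊆ F ∪ G := hF.trans Finset.subset_union_left
      rw [if_pos h1, if_pos h2]
      rw [Finset.inf'_congr _ rfl (g := fun _ => (2:ℝ)) (fun a ha => by
        simp [hF ha, hG ha]; norm_num)]
      rw [Finset.inf'_const]; norm_num
    · by_cases h1 : H.1 ⊆ F ∪ G
      · rw [if_pos h1, if_neg h2]
        obtain ⟨a, haH, haFG⟩ := Finset.not_subset.mp h2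
        apply le_antisymm
        · have hval : ((fun b => if b ∈ F then (1:ℝ) else 0)
              + (fun b => if b ∈ G then (1:ℝ) else 0)) a = 1 := by
            have hmem := Finset.mem_union.mp (h1 haH)
            have hnot : ¬ (a ∈ F ∧ a ∈ G) := by simpa [Finset.mem_inter] using haFG
            by_cases hF : a ∈ F <;> by_cases hG : a ∈ G <;> simp_all
          have hle := Finset.inf'_le
            ((fun b => if b ∈ F then (1:ℝ) else 0) + (fun b => if b ∈ G then (1:ℝ) else 0)) haH
          rw [hval] at hle
          linarith
        · apply Finset.le_inf'
          intro b hb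
          have := h1 hb
          rw [Finset.mem_union] at this
          rcases this with hb' | hb' <;>
          · simp only [Pi.add_apply]
            by_cases hF : b ∈ F <;> by_cases hG : b ∈ G <;> simp_all <;> norm_num
      · rw [if_neg h1, if_neg h2]
        obtain ⟨a, haH, haFG⟩ := Finset.not_subset.mp h1
        have hF : a ∉ F := fun h => haFG (Finset.mem_union_left _ h)
        have hG : a ∉ G := fun h => haFG (Finset.mem_union_right _ h)
        apply le_antisymm
        · have hle := Finset.inf'_le
            ((fun b => if b ∈ F then (1:ℝ) else 0) + (fun b => if b ∈ G then (1:ℝ) else 0)) haH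
          exact le_trans hle (by simp [Pi.add_apply, hF, hG])
        · apply Finset.le_inf'
          intro b _
          simp only [Pi.add_apply]
          by_cases hF : b ∈ F <;> by_cases hG : b ∈ G <;> simp [hF, hG] <;> norm_num
  rw [key]
  by_cases h1 : H.1 ⊆ F ∪ G <;> by_cases h2 : H.1 ⊆ F ∩ G <;> simp [h1, h2] <;> ring

lemma sup_mem_of_subset {N : Type*} [DecidableEq N] (Fam : Finset (Finset N))
    (huc : ∀ F ∈ Fam, ∀ G ∈ Fam, F ∪ G ∈ Fam) :
    ∀ T : Finset (Finset N), T ⊆ Fam → T.Nonempty → T.sup id ∈ Fam := by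
  intro T
  induction T using Finset.cons_induction with
  | empty => intro _ h; exact absurd h (by simp)
  | cons a s ha ih =>
    intro hsub _
    rw [Finset.sup_cons]
    rcases s.eq_empty_or_nonempty with rfl | hs
    · simpa using hsub (Finset.mem_cons_self a ∅)
    · have hmem : a ∈ Fam := hsub (Finset.mem_cons_self a s)
      have := ih (fun x hx => hsub (Finset.mem_cons_of_mem hx)) hs
      simpa [Finset.sup_eq_union] using huc a hmem (s.sup id) this

/-- on a union-closed family, if the Choquet functional of a capacity v is
superadditive on ℝ^N₊, then v is supermodular:
v(F∪G) + v(F∧G) ≥ v(F) + v(G), where F∧G = ∪{H ∈ Fam : H ⊆ F∩G} and v(∅) = 0. -/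
theorem stmt_16 {N : Type*} [Fintype N] [DecidableEq N]
    (Fam : Finset (Finset N)) (hne : ∀ F ∈ Fam, F.Nonempty)
    (hcov : ∀ x : N, ∃ F ∈ Fam, x ∈ F)
    (huc : ∀ F ∈ Fam, ∀ G ∈ Fam, F ∪ G ∈ Fam)
    (v : Finset N → ℝ) (hv0 : ∀ F ∈ Fam, 0 ≤ v F)
    (hmono : ∀ F ∈ Fam, ∀ G ∈ Fam, F ⊆ G → v F ≤ v G)
    (hvempty : v ∅ = 0)
    (β : Finset N → ℝ)
    (hrep : ∀ G ∈ Fam, v G = ∑ F ∈ Fam.filter (fun F => F ⊆ G), β F)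
    (hsuper : ∀ f g : N → ℝ, (∀ a, 0 ≤ f a) → (∀ a, 0 ≤ g a) →
        cho Fam hne β f + cho Fam hne β g ≤ cho Fam hne β (f + g)) :
    ∀ F ∈ Fam, ∀ G ∈ Fam,
      v F + v G ≤ v (F ∪ G) + v ((Fam.filter (fun H => H ⊆ F ∩ G)).sup id) := by
  intro F hF G hG
  have hkey := hsuper (fun a => if a ∈ F then (1:ℝ) else 0) (fun a => if a ∈ G then (1:ℝ) else 0)
    (fun a => by by_cases h : a ∈ F <;> simp [h])
    (fun a => by by_cases h : a ∈ G <;> simp [h])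
  rw [cho_indicator, cho_indicator, cho_sum_indicator] at hkey
  have hFG : F ∪ G ∈ Fam := huc F hF G hG
  rw [← hrep F hF, ← hrep G hG, ← hrep (F ∪ G) hFG] at hkey
  -- identify the meet sum
  set T := Fam.filter (fun H => H ⊆ F ∩ G) with hT
  have hmeet : (∑ H ∈ T, β H) = v (T.sup id) := by
    rcases T.eq_empty_or_nonempty with hTe | hTne
    · rw [hTe]; simp [hvempty]
    · have hTsub : T ⊆ Fam := Finset.filter_subset _ _
      have hMmem : T.sup id ∈ Fam := sup_mem_of_subset Fam huc T hTsub hTne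
      have hMsub : T.sup id ⊆ F ∩ G := by
        show T.sup id ≤ F ∩ G
        apply Finset.sup_le
        intro H hH
        exact (Finset.mem_filter.mp hH).2
      have hfilter : T = Fam.filter (fun H => H ⊆ T.sup id) := by
        apply Finset.ext
        intro H
        rw [hT, Finset.mem_filter, Finset.mem_filter]
        constructor
        · rintro ⟨h1, h2⟩
          refine ⟨h1, ?_⟩
          have hmem : H ∈ T := by rw [hT, Finset.mem_filter]; exact ⟨h1, h2⟩
          have : id H ≤ T.sup id := Finset.le_sup hmem
          exact this
        · rintro ⟨h1, h2⟩
          exact ⟨h1, h2.trans hMsub⟩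
      rw [hrep (T.sup id) hMmem, ← hfilter]
  rw [hmeet] at hkey
  exact hkey
end

section
/- Let F be a union-closed family of nonempty subsets of a finite set N covering N, and v a capacity on (F, ⊆) with extension v̂: 2^N → ℝ given by v̂(S) = Σ { v(F) : F maximal in F(S) }. Then v is supermodular on (F, ⊆) (i.e., v(F∪G) + v(F∧G) ≥ v(F) + v(G) for all F, G ∈ F, where F∧G = ∪{H ∈ F : H ⊆ F∩G}) if and only if v̂ is supermodular on (2^N, ⊆). -/
open scoped Classical

section Aux

variable {N : Type*} [DecidableEq N] (Fam : Finset (Finset N))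

/-- abbreviation for the maximum member of F(S) (empty if F(S) is empty) -/
noncomputable def msup (S : Finset N) : Finset N :=
  (Fam.filter (fun H => H ⊆ S)).sup id

lemma sup_mem_of_uc (huc : ∀ F ∈ Fam, ∀ G ∈ Fam, F ∪ G ∈ Fam) :
    ∀ t : Finset (Finset N), t ⊆ Fam → t.Nonempty → t.sup id ∈ Fam := by
  intro t
  refine Finset.induction_on t (fun _ h => absurd h (by simp)) ?_
  intro a s ha ih hsub _
  rcases s.eq_empty_or_nonempty with rfl | htne
  · simpa using hsub (Finset.mem_insert_self a ∅)
  · rw [Finset.sup_insert]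
    exact huc a (hsub (Finset.mem_insert_self a s)) _
      (ih (fun x hx => hsub (Finset.mem_insert_of_mem hx)) htne)

lemma msup_mem (huc : ∀ F ∈ Fam, ∀ G ∈ Fam, F ∪ G ∈ Fam) {S : Finset N}
    (h : (Fam.filter (fun H => H ⊆ S)).Nonempty) : msup Fam S ∈ Fam :=
  sup_mem_of_uc Fam huc _ (Finset.filter_subset _ _) h

lemma msup_subset (S : Finset N) : msup Fam S ⊆ S := by
  intro x hx
  rw [msup, Finset.mem_sup] at hx
  obtain ⟨H, hH, hxH⟩ := hx
  exact (Finset.mem_filter.mp hH).2 hxH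

lemma le_msup {F S : Finset N} (hF : F ∈ Fam) (hFS : F ⊆ S) : F ⊆ msup Fam S := by
  intro x hx
  rw [msup, Finset.mem_sup]
  exact ⟨F, Finset.mem_filter.mpr ⟨hF, hFS⟩, hx⟩

lemma msup_self {F : Finset N} (hF : F ∈ Fam) : msup Fam F = F :=
  Finset.Subset.antisymm (msup_subset Fam F) (le_msup Fam hF (Finset.Subset.refl F))

lemma msup_nonneg (huc : ∀ F ∈ Fam, ∀ G ∈ Fam, F ∪ G ∈ Fam)
    (v : Finset N → ℝ) (hv0 : ∀ F ∈ Fam, 0 ≤ v F) (hvempty : v ∅ = 0)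
    (S : Finset N) : 0 ≤ v (msup Fam S) := by
  rcases (Fam.filter (fun H => H ⊆ S)).eq_empty_or_nonempty with he | hne
  · rw [msup, he]; simp [hvempty]
  · exact hv0 _ (msup_mem Fam huc hne)

lemma msup_mono (huc : ∀ F ∈ Fam, ∀ G ∈ Fam, F ∪ G ∈ Fam)
    (v : Finset N → ℝ) (hv0 : ∀ F ∈ Fam, 0 ≤ v F)
    (hmono : ∀ F ∈ Fam, ∀ G ∈ Fam, F ⊆ G → v F ≤ v G) (hvempty : v ∅ = 0)
    {S T : Finset N} (hST : S ⊆ T) : v (msup Fam S) ≤ v (msup Fam T) := by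
  have hfil : (Fam.filter (fun H => H ⊆ S)) ⊆ (Fam.filter (fun H => H ⊆ T)) := by
    intro H hH
    rw [Finset.mem_filter] at hH ⊢
    exact ⟨hH.1, hH.2.trans hST⟩
  rcases (Fam.filter (fun H => H ⊆ S)).eq_empty_or_nonempty with he | hne
  · rw [msup, he]
    simpa [hvempty] using msup_nonneg Fam huc v hv0 hvempty T
  · have hsub : msup Fam S ⊆ msup Fam T := by
      intro x hx
      rw [msup, Finset.mem_sup] at hx ⊢
      obtain ⟨H, hH, hxH⟩ := hx
      exact ⟨H, hfil hH, hxH⟩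
    exact hmono _ (msup_mem Fam huc hne) _ (msup_mem Fam huc (hne.mono hfil)) hsub

lemma vhat_eq (hne : ∀ F ∈ Fam, F.Nonempty)
    (huc : ∀ F ∈ Fam, ∀ G ∈ Fam, F ∪ G ∈ Fam)
    (v : Finset N → ℝ) (hvempty : v ∅ = 0) (S : Finset N) :
    vhat Fam v S = v (msup Fam S) := by
  rcases (Fam.filter (fun H => H ⊆ S)).eq_empty_or_nonempty with he | hne'
  · have h1 : Fam.filter (fun F => F ⊆ S ∧ ∀ F' ∈ Fam, F' ⊆ S → F ⊆ F' → F = F') = ∅ := by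
      rw [Finset.eq_empty_iff_forall_notMem]
      intro F hF
      rw [Finset.mem_filter] at hF
      have : F ∈ Fam.filter (fun H => H ⊆ S) := Finset.mem_filter.mpr ⟨hF.1, hF.2.1⟩
      rw [he] at this
      exact absurd this (Finset.notMem_empty F)
    rw [vhat, h1, msup, he]
    simp [hvempty]
  · have hmem := msup_mem Fam huc hne'
    have h1 : Fam.filter (fun F => F ⊆ S ∧ ∀ F' ∈ Fam, F' ⊆ S → F ⊆ F' → F = F')
        = {msup Fam S} := by
      ext F
      rw [Finset.mem_filter, Finset.mem_singleton]
      constructor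
      · rintro ⟨hF, hFS, hmax⟩
        exact hmax _ hmem (msup_subset Fam S) (le_msup Fam hF hFS)
      · rintro rfl
        refine ⟨hmem, msup_subset Fam S, fun F' hF' hF'S hsub => ?_⟩
        exact Finset.Subset.antisymm hsub (le_msup Fam hF' hF'S)
    rw [vhat, h1, Finset.sum_singleton]

end Aux

/-- for a union-closed family, a capacity v is supermodular on (Fam, ⊆)
iff its extension v̂ is supermodular on (2^N, ⊆). -/
theorem stmt_17 {N : Type*} [Fintype N] [DecidableEq N]
    (Fam : Finset (Finset N)) (hne : ∀ F ∈ Fam, F.Nonempty)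
    (hcov : ∀ x : N, ∃ F ∈ Fam, x ∈ F)
    (huc : ∀ F ∈ Fam, ∀ G ∈ Fam, F ∪ G ∈ Fam)
    (v : Finset N → ℝ) (hv0 : ∀ F ∈ Fam, 0 ≤ v F)
    (hmono : ∀ F ∈ Fam, ∀ G ∈ Fam, F ⊆ G → v F ≤ v G)
    (hvempty : v ∅ = 0) :
    (∀ F ∈ Fam, ∀ G ∈ Fam,
        v F + v G ≤ v (F ∪ G) + v ((Fam.filter (fun H => H ⊆ F ∩ G)).sup id)) ↔
    (∀ S T : Finset N,
        vhat Fam v S + vhat Fam v T ≤ vhat Fam v (S ∪ T) + vhat Fam v (S ∩ T)) := by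
  have hveq := vhat_eq Fam hne huc v hvempty
  have hM := fun {S T} h => msup_mono Fam huc v hv0 hmono hvempty (S := S) (T := T) h
  have hNN := msup_nonneg Fam huc v hv0 hvempty
  constructor
  · intro h S T
    rw [hveq, hveq, hveq, hveq]
    rcases (Fam.filter (fun H => H ⊆ S)).eq_empty_or_nonempty with heS | hneS
    · have h0 : v (msup Fam S) = 0 := by rw [msup, heS]; simpa using hvempty
      rw [h0, zero_add]
      have h1 : v (msup Fam T) ≤ v (msup Fam (S ∪ T)) := hM Finset.subset_union_right
      linarith [hNN (S ∩ T)]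
    rcases (Fam.filter (fun H => H ⊆ T)).eq_empty_or_nonempty with heT | hneT
    · have h0 : v (msup Fam T) = 0 := by rw [msup, heT]; simpa using hvempty
      rw [h0, add_zero]
      have h1 : v (msup Fam S) ≤ v (msup Fam (S ∪ T)) := hM Finset.subset_union_left
      linarith [hNN (S ∩ T)]
    · have hFS := msup_mem Fam huc hneS
      have hFT := msup_mem Fam huc hneT
      have hsup := h _ hFS _ hFT
      have hu : v (msup Fam S ∪ msup Fam T) ≤ v (msup Fam (S ∪ T)) := by
        rw [← msup_self Fam (huc _ hFS _ hFT)]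
        exact hM (Finset.union_subset_union (msup_subset Fam S) (msup_subset Fam T))
      have hi : v ((Fam.filter (fun H => H ⊆ msup Fam S ∩ msup Fam T)).sup id)
          ≤ v (msup Fam (S ∩ T)) :=
        hM (Finset.inter_subset_inter (msup_subset Fam S) (msup_subset Fam T))
      linarith
  · intro h F hF G hG
    have := h F G
    rw [hveq, hveq, hveq, hveq, msup_self Fam hF, msup_self Fam hG,
      msup_self Fam (huc _ hF _ hG)] at this
    exact this
end

section
/- Let F be a union-closed family of nonempty subsets of a finite set N covering N, and v a supermodular capacity on (F, ⊆). Then for all f ∈ ℝ^N₊, ∫_F f dv = max { Σ_{F∈F} y_F v(F) : y ∈ ℝ^F₊, Σ_{F∈F} y_F 1_F ≤ f }, and consequently the functional f ↦ ∫_F f dv is positively homogeneous and superadditive on ℝ^N₊. -/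
open scoped Classical

set_option linter.unusedSectionVars false

namespace Stmt18

variable {N : Type*} [Fintype N] [DecidableEq N]

/-- The "interior" of a set A w.r.t. the family: union of members contained in A. -/
def intA (Fam : Finset (Finset N)) (A : Finset N) : Finset N :=
  (Fam.filter (fun H => H ⊆ A)).sup id

lemma sup_mem {Fam : Finset (Finset N)}
    (huc : ∀ F ∈ Fam, ∀ G ∈ Fam, F ∪ G ∈ Fam) :
    ∀ s : Finset (Finset N), s ⊆ Fam → s.Nonempty → s.sup id ∈ Fam := by
  intro s
  induction s using Finset.induction_on with
  | empty => intro _ h; simp at h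
  | @insert a s ha ih =>
    intro hsub hne
    rcases s.eq_empty_or_nonempty with rfl | hs
    · simpa using hsub (Finset.mem_insert_self _ _)
    · rw [Finset.sup_insert]
      have h1 : a ∈ Fam := hsub (Finset.mem_insert_self _ _)
      have h2 : s.sup id ∈ Fam := ih (fun x hx => hsub (Finset.mem_insert_of_mem hx)) hs
      have := huc a h1 (s.sup id) h2
      simpa [Finset.sup_eq_union] using this

lemma intA_subset (Fam : Finset (Finset N)) (A : Finset N) : intA Fam A ⊆ A := by
  intro x hx
  obtain ⟨H, hH, hx⟩ := Finset.mem_sup.1 hx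
  exact (Finset.mem_filter.1 hH).2 hx

lemma subset_intA {Fam : Finset (Finset N)} {F A : Finset N}
    (hF : F ∈ Fam) (hFA : F ⊆ A) : F ⊆ intA Fam A := by
  intro x hx
  exact Finset.mem_sup.2 ⟨F, Finset.mem_filter.2 ⟨hF, hFA⟩, hx⟩

lemma intA_mem_or_empty {Fam : Finset (Finset N)}
    (huc : ∀ F ∈ Fam, ∀ G ∈ Fam, F ∪ G ∈ Fam) (A : Finset N) :
    intA Fam A ∈ Fam ∨ intA Fam A = ∅ := by
  rcases (Fam.filter (fun H => H ⊆ A)).eq_empty_or_nonempty with h | h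
  · right; simp [intA, h]
  · left; exact sup_mem huc _ (Finset.filter_subset _ _) h

lemma intA_mono {Fam : Finset (Finset N)} {A B : Finset N} (h : A ⊆ B) :
    intA Fam A ⊆ intA Fam B := by
  intro x hx
  obtain ⟨H, hH, hx⟩ := Finset.mem_sup.1 hx
  exact subset_intA (Finset.mem_filter.1 hH).1 ((Finset.mem_filter.1 hH).2.trans h) hx

variable {Fam : Finset (Finset N)} {v : Finset N → ℝ} {β : Finset N → ℝ}

lemma v_intA_nonneg (hv0 : ∀ F ∈ Fam, 0 ≤ v F) (hvempty : v ∅ = 0)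
    (huc : ∀ F ∈ Fam, ∀ G ∈ Fam, F ∪ G ∈ Fam) (A : Finset N) :
    0 ≤ v (intA Fam A) := by
  rcases intA_mem_or_empty huc A with h | h
  · exact hv0 _ h
  · rw [h, hvempty]

lemma v_le_v_intA (hne : ∀ F ∈ Fam, F.Nonempty)
    (hmono : ∀ F ∈ Fam, ∀ G ∈ Fam, F ⊆ G → v F ≤ v G)
    (huc : ∀ F ∈ Fam, ∀ G ∈ Fam, F ∪ G ∈ Fam)
    {F A : Finset N} (hF : F ∈ Fam) (hFA : F ⊆ A) : v F ≤ v (intA Fam A) := by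
  rcases intA_mem_or_empty huc A with h | h
  · exact hmono F hF _ h (subset_intA hF hFA)
  · have : F ⊆ (∅ : Finset N) := h ▸ subset_intA hF hFA
    rw [Finset.subset_empty] at this
    exact absurd this (hne F hF).ne_empty

lemma v_intA_mono (hv0 : ∀ F ∈ Fam, 0 ≤ v F) (hvempty : v ∅ = 0)
    (hmono : ∀ F ∈ Fam, ∀ G ∈ Fam, F ⊆ G → v F ≤ v G)
    (huc : ∀ F ∈ Fam, ∀ G ∈ Fam, F ∪ G ∈ Fam)
    {A B : Finset N} (h : A ⊆ B) : v (intA Fam A) ≤ v (intA Fam B) := by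
  rcases intA_mem_or_empty huc A with hA | hA
  · rcases intA_mem_or_empty huc B with hB | hB
    · exact hmono _ hA _ hB (intA_mono h)
    · have h2 : intA Fam A ⊆ (∅ : Finset N) := hB ▸ intA_mono h
      rw [Finset.subset_empty] at h2
      rw [h2, hB]
  · rw [hA, hvempty]
    exact v_intA_nonneg hv0 hvempty huc B

lemma filter_intA (A : Finset N) :
    Fam.filter (fun F => F ⊆ intA Fam A) = Fam.filter (fun F => F ⊆ A) := by
  ext F
  simp only [Finset.mem_filter]
  constructor
  · rintro ⟨h1, h2⟩; exact ⟨h1, h2.trans (intA_subset Fam A)⟩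
  · rintro ⟨h1, h2⟩; exact ⟨h1, subset_intA h1 h2⟩

lemma v_intA_rep (hne : ∀ F ∈ Fam, F.Nonempty) (hvempty : v ∅ = 0)
    (huc : ∀ F ∈ Fam, ∀ G ∈ Fam, F ∪ G ∈ Fam)
    (hrep : ∀ G ∈ Fam, v G = ∑ F ∈ Fam.filter (fun F => F ⊆ G), β F)
    (A : Finset N) :
    v (intA Fam A) = ∑ F ∈ Fam.filter (fun F => F ⊆ A), β F := by
  rcases intA_mem_or_empty huc A with h | h
  · rw [hrep _ h, filter_intA]
  · have hemp : Fam.filter (fun F => F ⊆ A) = ∅ := by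
      rw [Finset.filter_eq_empty_iff]
      intro F hF hFA
      have h2 : F ⊆ (∅ : Finset N) := h ▸ subset_intA hF hFA
      rw [Finset.subset_empty] at h2
      exact absurd h2 (hne F hF).ne_empty
    rw [h, hvempty, hemp, Finset.sum_empty]

/-! ### Sorted enumeration machinery -/

variable {n : ℕ}

noncomputable def fv (e : Fin n ≃ N) (f : N → ℝ) (k : ℕ) : ℝ :=
  if h : k < n then f (e ⟨k, h⟩) else 0

def NK (e : Fin n ≃ N) (k : ℕ) : Finset N :=
  Finset.univ.filter (fun a => ((e.symm a : ℕ) < k))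

lemma mem_NK {e : Fin n ≃ N} {k : ℕ} {a : N} :
    a ∈ NK e k ↔ (e.symm a : ℕ) < k := by simp [NK]

lemma NK_mono (e : Fin n ≃ N) {j k : ℕ} (h : j ≤ k) : NK e j ⊆ NK e k := by
  intro a ha; rw [mem_NK] at *; omega

lemma NK_zero (e : Fin n ≃ N) : NK e 0 = ∅ := by
  ext a; simp [mem_NK]

lemma NK_top (e : Fin n ≃ N) : NK e n = Finset.univ := by
  ext a; simp [mem_NK, (e.symm a).isLt]

lemma fv_nonneg (e : Fin n ≃ N) {f : N → ℝ} (hf : ∀ a, 0 ≤ f a) (k : ℕ) :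
    0 ≤ fv e f k := by
  rw [fv]; split
  · exact hf _
  · exact le_refl 0

lemma fv_of_lt (e : Fin n ≃ N) (f : N → ℝ) {k : ℕ} (h : k < n) :
    fv e f k = f (e ⟨k, h⟩) := dif_pos h

lemma fv_top (e : Fin n ≃ N) (f : N → ℝ) : fv e f n = 0 := dif_neg (lt_irrefl n)

lemma fv_symm (e : Fin n ≃ N) (f : N → ℝ) (a : N) :
    fv e f ((e.symm a : ℕ)) = f a := by
  rw [fv_of_lt e f (e.symm a).isLt]
  simp

lemma fv_anti (e : Fin n ≃ N) {f : N → ℝ} (hf : ∀ a, 0 ≤ f a)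
    (he : ∀ i j : Fin n, i ≤ j → f (e j) ≤ f (e i)) {j k : ℕ} (h : j ≤ k) :
    fv e f k ≤ fv e f j := by
  by_cases hk : k < n
  · have hj : j < n := lt_of_le_of_lt h hk
    rw [fv_of_lt e f hk, fv_of_lt e f hj]
    exact he ⟨j, hj⟩ ⟨k, hk⟩ h
  · rw [fv, dif_neg hk]
    exact fv_nonneg e hf j

lemma tele (g : ℕ → ℝ) {m k : ℕ} (h : m ≤ k) :
    ∑ i ∈ Finset.Ico m k, (g i - g (i + 1)) = g m - g k := by
  rw [Finset.sum_Ico_eq_sub _ h, Finset.sum_range_sub' g, Finset.sum_range_sub' g]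
  ring

lemma filter_le_range (m k : ℕ) :
    (Finset.range k).filter (fun i => m ≤ i) = Finset.Ico m k := by
  ext i; simp [Finset.mem_Ico, and_comm]

/-- position of the minimum of `f` on `F` -/
noncomputable def mp (e : Fin n ≃ N) (F : Finset N) (hF : F.Nonempty) : ℕ :=
  F.sup' hF (fun a => ((e.symm a : ℕ)))

lemma mp_lt (e : Fin n ≃ N) (F : Finset N) (hF : F.Nonempty) : mp e F hF < n := by
  obtain ⟨a, _, hEq⟩ := Finset.exists_mem_eq_sup' hF (fun a => ((e.symm a : ℕ)))
  rw [mp, hEq]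
  exact (e.symm a).isLt

lemma subset_NK_iff (e : Fin n ≃ N) {F : Finset N} (hF : F.Nonempty) (k : ℕ) :
    F ⊆ NK e (k + 1) ↔ mp e F hF ≤ k := by
  rw [mp, Finset.sup'_le_iff]
  constructor
  · intro h a ha
    have := mem_NK.1 (h ha); omega
  · intro h a ha
    have := h a ha
    rw [mem_NK]; omega

lemma inf'_eq_fv (e : Fin n ≃ N) {f : N → ℝ}
    (he : ∀ i j : Fin n, i ≤ j → f (e j) ≤ f (e i))
    {F : Finset N} (hF : F.Nonempty) :
    F.inf' hF f = fv e f (mp e F hF) := by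
  obtain ⟨a, ha, hEq⟩ := Finset.exists_mem_eq_sup' hF (fun a => ((e.symm a : ℕ)))
  rw [mp, hEq, fv_symm]
  apply le_antisymm
  · exact Finset.inf'_le _ ha
  · apply Finset.le_inf'
    intro b hb
    have h1 : (e.symm b : ℕ) ≤ (e.symm a : ℕ) := by
      rw [← hEq]
      exact Finset.le_sup' (fun a => ((e.symm a : ℕ))) hb
    have h2 : f (e (e.symm a)) ≤ f (e (e.symm b)) := he _ _ (Fin.le_def.2 h1)
    simpa using h2

lemma NK_succ (e : Fin n ≃ N) {k : ℕ} (hk : k < n) :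
    NK e (k + 1) = insert (e ⟨k, hk⟩) (NK e k) := by
  ext a
  simp only [mem_NK, Finset.mem_insert]
  constructor
  · intro h
    rcases Nat.lt_succ_iff_lt_or_eq.1 h with h | h
    · exact Or.inr h
    · left
      have : e.symm a = ⟨k, hk⟩ := Fin.ext h
      rw [← this, Equiv.apply_symm_apply]
  · rintro (rfl | h)
    · simp
    · omega

lemma NK_stable (e : Fin n ≃ N) {k : ℕ} (hk : n ≤ k) : NK e k = Finset.univ := by
  ext a; simp only [mem_NK, Finset.mem_filter, Finset.mem_univ, iff_true]
  have := (e.symm a).isLt; omega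

lemma sum_gap_vM (hne : ∀ F ∈ Fam, F.Nonempty)
    (huc : ∀ F ∈ Fam, ∀ G ∈ Fam, F ∪ G ∈ Fam)
    (hvempty : v ∅ = 0)
    (hrep : ∀ G ∈ Fam, v G = ∑ F ∈ Fam.filter (fun F => F ⊆ G), β F)
    (e : Fin n ≃ N) {f : N → ℝ}
    (he : ∀ i j : Fin n, i ≤ j → f (e j) ≤ f (e i)) :
    ∑ k ∈ Finset.range n, (fv e f k - fv e f (k+1)) * v (intA Fam (NK e (k+1)))
      = cho Fam hne β f := by
  have step1 : ∀ k : ℕ, (fv e f k - fv e f (k+1)) * v (intA Fam (NK e (k+1)))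
      = ∑ F ∈ Fam, if F ⊆ NK e (k+1) then (fv e f k - fv e f (k+1)) * β F else 0 := by
    intro k
    rw [v_intA_rep hne hvempty huc hrep, Finset.mul_sum, Finset.sum_filter]
  have step2 : ∀ F ∈ Fam,
      (∑ k ∈ Finset.range n, if F ⊆ NK e (k+1) then (fv e f k - fv e f (k+1)) * β F else 0)
        = β F * (if h : F.Nonempty then F.inf' h f else 0) := by
    intro F hF
    have hFne := hne F hF
    rw [dif_pos hFne, inf'_eq_fv e he hFne]
    calc (∑ k ∈ Finset.range n, if F ⊆ NK e (k+1) then (fv e f k - fv e f (k+1)) * β F else 0)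
        = ∑ k ∈ Finset.range n,
            if mp e F hFne ≤ k then (fv e f k - fv e f (k+1)) * β F else 0 :=
          Finset.sum_congr rfl fun k _ => if_congr (subset_NK_iff e hFne k) rfl rfl
      _ = ∑ k ∈ (Finset.range n).filter (fun k => mp e F hFne ≤ k),
            (fv e f k - fv e f (k+1)) * β F := (Finset.sum_filter _ _).symm
      _ = ∑ k ∈ Finset.Ico (mp e F hFne) n, (fv e f k - fv e f (k+1)) * β F := by
          rw [filter_le_range]
      _ = (∑ k ∈ Finset.Ico (mp e F hFne) n, (fv e f k - fv e f (k+1))) * β F := by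
          rw [Finset.sum_mul]
      _ = (fv e f (mp e F hFne) - fv e f n) * β F := by
          rw [tele (fv e f) (le_of_lt (mp_lt e F hFne))]
      _ = β F * fv e f (mp e F hFne) := by rw [fv_top]; ring
  calc ∑ k ∈ Finset.range n, (fv e f k - fv e f (k+1)) * v (intA Fam (NK e (k+1)))
      = ∑ k ∈ Finset.range n, ∑ F ∈ Fam,
          (if F ⊆ NK e (k+1) then (fv e f k - fv e f (k+1)) * β F else 0) :=
        Finset.sum_congr rfl fun k _ => step1 k
    _ = ∑ F ∈ Fam, ∑ k ∈ Finset.range n,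
          (if F ⊆ NK e (k+1) then (fv e f k - fv e f (k+1)) * β F else 0) :=
        Finset.sum_comm
    _ = ∑ F ∈ Fam, β F * (if h : F.Nonempty then F.inf' h f else 0) :=
        Finset.sum_congr rfl step2
    _ = ∑ F ∈ Fam.attach, β F.1 * (if h : F.1.Nonempty then F.1.inf' h f else 0) :=
        (Finset.sum_attach Fam (fun F => β F * (if h : F.Nonempty then F.inf' h f else 0))).symm
    _ = cho Fam hne β f := by
        rw [cho]
        refine Finset.sum_congr rfl fun F _ => ?_
        rw [dif_pos (hne F.1 F.2)]

lemma intA_empty (Fam : Finset (Finset N)) : intA Fam ∅ = ∅ :=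
  Finset.subset_empty.1 (intA_subset Fam ∅)

lemma key (Fam : Finset (Finset N)) (hne : ∀ F ∈ Fam, F.Nonempty)
    (huc : ∀ F ∈ Fam, ∀ G ∈ Fam, F ∪ G ∈ Fam)
    (v : Finset N → ℝ) (hv0 : ∀ F ∈ Fam, 0 ≤ v F)
    (hmono : ∀ F ∈ Fam, ∀ G ∈ Fam, F ⊆ G → v F ≤ v G)
    (hvempty : v ∅ = 0)
    (hsupmod : ∀ F ∈ Fam, ∀ G ∈ Fam,
        v F + v G ≤ v (F ∪ G) + v ((Fam.filter (fun H => H ⊆ F ∩ G)).sup id))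
    (β : Finset N → ℝ)
    (hrep : ∀ G ∈ Fam, v G = ∑ F ∈ Fam.filter (fun F => F ⊆ G), β F)
    (f : N → ℝ) (hf : ∀ a, 0 ≤ f a) :
    IsGreatest {r : ℝ | ∃ y : Finset N → ℝ, (∀ F, 0 ≤ y F) ∧
          (∀ a : N, (∑ F ∈ Fam.filter (fun F => a ∈ F), y F) ≤ f a) ∧
          r = ∑ F ∈ Fam, y F * v F}
        (cho Fam hne β f) := by
  obtain ⟨n, e, he⟩ : ∃ (n : ℕ) (e : Fin n ≃ N),
      ∀ i j : Fin n, i ≤ j → f (e j) ≤ f (e i) := by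
    refine ⟨Fintype.card N, (Tuple.sort fun i => -f ((Fintype.equivFin N).symm i)).trans
      (Fintype.equivFin N).symm, fun i j hij => ?_⟩
    have h := Tuple.monotone_sort (fun i => -f ((Fintype.equivFin N).symm i)) hij
    simp only [Function.comp_apply, Equiv.trans_apply] at h ⊢
    linarith
  have hgap : ∀ k : ℕ, 0 ≤ fv e f k - fv e f (k+1) :=
    fun k => sub_nonneg.2 (fv_anti e hf he (Nat.le_succ k))
  have hsum := sum_gap_vM (β := β) hne huc hvempty hrep e he
  constructor
  · -- membership: the greedy primal solution
    refine ⟨fun S => ∑ k ∈ Finset.range n,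
        if intA Fam (NK e (k+1)) = S then fv e f k - fv e f (k+1) else 0, ?_, ?_, ?_⟩
    · intro S
      refine Finset.sum_nonneg fun k _ => ?_
      split
      · exact hgap k
      · exact le_refl 0
    · intro a
      have hpos : ((e.symm a : ℕ)) < n := (e.symm a).isLt
      calc (∑ F ∈ Fam.filter (fun F => a ∈ F), ∑ k ∈ Finset.range n,
              if intA Fam (NK e (k+1)) = F then fv e f k - fv e f (k+1) else 0)
          = ∑ k ∈ Finset.range n, ∑ F ∈ Fam.filter (fun F => a ∈ F),
              (if intA Fam (NK e (k+1)) = F then fv e f k - fv e f (k+1) else 0) :=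
            Finset.sum_comm
        _ = ∑ k ∈ Finset.range n,
              (if intA Fam (NK e (k+1)) ∈ Fam.filter (fun F => a ∈ F)
                then fv e f k - fv e f (k+1) else 0) :=
            Finset.sum_congr rfl fun k _ =>
              Finset.sum_ite_eq (Fam.filter (fun F => a ∈ F)) _ _
        _ ≤ ∑ k ∈ Finset.range n,
              (if (e.symm a : ℕ) ≤ k then fv e f k - fv e f (k+1) else 0) := by
            refine Finset.sum_le_sum fun k _ => ?_
            split_ifs with h1 h2 h2
            · exact le_refl _
            · exfalso
              have ha : a ∈ intA Fam (NK e (k+1)) := (Finset.mem_filter.1 h1).2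
              have := mem_NK.1 (intA_subset Fam (NK e (k+1)) ha)
              omega
            · exact hgap k
            · exact le_refl 0
        _ = ∑ k ∈ (Finset.range n).filter (fun k => (e.symm a : ℕ) ≤ k),
              (fv e f k - fv e f (k+1)) := (Finset.sum_filter _ _).symm
        _ = ∑ k ∈ Finset.Ico ((e.symm a : ℕ)) n, (fv e f k - fv e f (k+1)) := by
            rw [filter_le_range]
        _ = fv e f ((e.symm a : ℕ)) - fv e f n := tele (fv e f) (le_of_lt hpos)
        _ = f a := by rw [fv_top, fv_symm]; ring
    · -- the value equals the Choquet integral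
      calc cho Fam hne β f
          = ∑ k ∈ Finset.range n, (fv e f k - fv e f (k+1)) * v (intA Fam (NK e (k+1))) :=
            hsum.symm
        _ = ∑ k ∈ Finset.range n,
              (if intA Fam (NK e (k+1)) ∈ Fam
                then (fv e f k - fv e f (k+1)) * v (intA Fam (NK e (k+1))) else 0) := by
            refine Finset.sum_congr rfl fun k _ => ?_
            split_ifs with h1
            · rfl
            · rcases intA_mem_or_empty huc (NK e (k+1)) with h | h
              · exact absurd h h1
              · rw [h, hvempty, mul_zero]
        _ = ∑ k ∈ Finset.range n, ∑ F ∈ Fam,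
              (if intA Fam (NK e (k+1)) = F then (fv e f k - fv e f (k+1)) * v F else 0) :=
            Finset.sum_congr rfl fun k _ => (Finset.sum_ite_eq Fam (intA Fam (NK e (k+1))) (fun F => (fv e f k - fv e f (k+1)) * v F)).symm
        _ = ∑ F ∈ Fam, ∑ k ∈ Finset.range n,
              (if intA Fam (NK e (k+1)) = F then (fv e f k - fv e f (k+1)) * v F else 0) :=
            Finset.sum_comm
        _ = ∑ F ∈ Fam, (∑ k ∈ Finset.range n,
              if intA Fam (NK e (k+1)) = F then fv e f k - fv e f (k+1) else 0) * v F := by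
            refine Finset.sum_congr rfl fun F _ => ?_
            rw [Finset.sum_mul]
            refine Finset.sum_congr rfl fun k _ => ?_
            rw [ite_mul, zero_mul]
  · -- upper bound: weak LP duality with the greedy dual solution
    rintro r ⟨y, hy0, hyc, rfl⟩
    have hvMmono : ∀ {j k : ℕ}, j ≤ k →
        v (intA Fam (NK e j)) ≤ v (intA Fam (NK e k)) :=
      fun h => v_intA_mono hv0 hvempty hmono huc (NK_mono e h)
    set x : N → ℝ := fun a =>
      v (intA Fam (NK e ((e.symm a : ℕ)+1))) - v (intA Fam (NK e ((e.symm a : ℕ)))) with hx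
    have hx0 : ∀ a, 0 ≤ x a := fun a => sub_nonneg.2 (hvMmono (Nat.le_succ _))
    have hdf : ∀ F ∈ Fam, v F ≤ ∑ a ∈ F, x a := by
      intro F hF
      have hind : ∀ k : ℕ, v (intA Fam (F ∩ NK e k))
          ≤ ∑ a ∈ F.filter (fun a => (e.symm a : ℕ) < k), x a := by
        intro k
        induction k with
        | zero =>
          have h1 : F.filter (fun a => (e.symm a : ℕ) < 0) = ∅ := by
            apply Finset.filter_false_of_mem; intro a _; omega
          rw [NK_zero, Finset.inter_empty, intA_empty, hvempty, h1, Finset.sum_empty]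
        | succ k ih =>
          by_cases hk : k < n
          · by_cases hak : e ⟨k, hk⟩ ∈ F
            · have hfilt : F.filter (fun a => (e.symm a : ℕ) < k + 1)
                  = insert (e ⟨k, hk⟩) (F.filter (fun a => (e.symm a : ℕ) < k)) := by
                ext a
                simp only [Finset.mem_filter, Finset.mem_insert]
                constructor
                · rintro ⟨haF, hlt⟩
                  rcases Nat.lt_succ_iff_lt_or_eq.1 hlt with h | h
                  · exact Or.inr ⟨haF, h⟩
                  · left
                    have h2 : e.symm a = ⟨k, hk⟩ := Fin.ext h
                    rw [← h2, Equiv.apply_symm_apply]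
                · rintro (rfl | ⟨haF, hlt⟩)
                  · exact ⟨hak, by simp⟩
                  · exact ⟨haF, by omega⟩
              have hnotmem : e ⟨k, hk⟩ ∉ F.filter (fun a => (e.symm a : ℕ) < k) := by
                simp only [Finset.mem_filter, Equiv.symm_apply_apply, not_and]
                intro _
                omega
              have hxak : x (e ⟨k, hk⟩)
                  = v (intA Fam (NK e (k+1))) - v (intA Fam (NK e k)) := by
                simp only [hx, Equiv.symm_apply_apply]
              rw [hfilt, Finset.sum_insert hnotmem, hxak]
              have core : v (intA Fam (F ∩ NK e (k+1))) + v (intA Fam (NK e k))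
                  ≤ v (intA Fam (NK e (k+1))) + v (intA Fam (F ∩ NK e k)) := by
                rcases intA_mem_or_empty huc (F ∩ NK e (k+1)) with hG | hG
                · have hGsub : intA Fam (F ∩ NK e (k+1)) ⊆ NK e (k+1) :=
                    (intA_subset _ _).trans Finset.inter_subset_right
                  rcases intA_mem_or_empty huc (NK e k) with hMk | hMk
                  · have hsm := hsupmod _ hG _ hMk
                    have e1 : ((Fam.filter (fun H =>
                        H ⊆ intA Fam (F ∩ NK e (k+1)) ∩ intA Fam (NK e k))).sup id)
                        = intA Fam (intA Fam (F ∩ NK e (k+1)) ∩ intA Fam (NK e k)) := rfl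
                    rw [e1] at hsm
                    have h2 : v (intA Fam (F ∩ NK e (k+1)) ∪ intA Fam (NK e k))
                        ≤ v (intA Fam (NK e (k+1))) :=
                      v_le_v_intA hne hmono huc (huc _ hG _ hMk)
                        (Finset.union_subset hGsub
                          ((intA_subset _ _).trans (NK_mono e (Nat.le_succ k))))
                    have h3 : v (intA Fam (intA Fam (F ∩ NK e (k+1)) ∩ intA Fam (NK e k)))
                        ≤ v (intA Fam (F ∩ NK e k)) :=
                      v_intA_mono hv0 hvempty hmono huc
                        (Finset.inter_subset_inter
                          ((intA_subset _ _).trans Finset.inter_subset_left)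
                          (intA_subset _ _))
                    linarith
                  · rw [hMk, hvempty]
                    have h2 : v (intA Fam (F ∩ NK e (k+1))) ≤ v (intA Fam (NK e (k+1))) :=
                      v_le_v_intA hne hmono huc hG hGsub
                    have h3 := v_intA_nonneg hv0 hvempty huc (F ∩ NK e k)
                    linarith
                · rw [hG, hvempty]
                  have h2 : v (intA Fam (NK e k)) ≤ v (intA Fam (NK e (k+1))) :=
                    hvMmono (Nat.le_succ k)
                  have h3 := v_intA_nonneg hv0 hvempty huc (F ∩ NK e k)
                  linarith
              linarith
            · have h1 : F ∩ NK e (k+1) = F ∩ NK e k := by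
                rw [NK_succ e hk, Finset.inter_insert_of_notMem hak]
              have h2 : F.filter (fun a => (e.symm a : ℕ) < k + 1)
                  = F.filter (fun a => (e.symm a : ℕ) < k) := by
                apply Finset.filter_congr
                intro a haF
                constructor
                · intro hlt
                  rcases Nat.lt_succ_iff_lt_or_eq.1 hlt with h | h
                  · exact h
                  · exfalso
                    have h2 : e.symm a = ⟨k, hk⟩ := Fin.ext h
                    apply hak
                    rw [← h2, Equiv.apply_symm_apply]
                    exact haF
                · intro hlt; omega
              rw [h1, h2]
              exact ih
          · have h1 : NK e (k+1) = NK e k := by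
              rw [NK_stable e (by omega), NK_stable e (le_of_not_gt hk)]
            have h2 : F.filter (fun a => (e.symm a : ℕ) < k + 1)
                = F.filter (fun a => (e.symm a : ℕ) < k) := by
              apply Finset.filter_congr
              intro a _
              have := (e.symm a).isLt
              constructor <;> intro <;> omega
            rw [h1, h2]
            exact ih
      have h1 := hind n
      rw [NK_top, Finset.inter_univ] at h1
      have h2 : intA Fam F = F :=
        Finset.Subset.antisymm (intA_subset _ _) (subset_intA hF (Finset.Subset.refl F))
      have h3 : F.filter (fun a => (e.symm a : ℕ) < n) = F :=
        Finset.filter_true_of_mem fun a _ => (e.symm a).isLt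
      rw [h2, h3] at h1
      exact h1
    have habel : ∑ k ∈ Finset.range n,
        fv e f k * (v (intA Fam (NK e (k+1))) - v (intA Fam (NK e k)))
        = ∑ k ∈ Finset.range n, (fv e f k - fv e f (k+1)) * v (intA Fam (NK e (k+1))) := by
      have h0 : v (intA Fam (NK e 0)) = 0 := by rw [NK_zero, intA_empty, hvempty]
      have h3 : ∑ k ∈ Finset.range n,
          (fv e f (k+1) * v (intA Fam (NK e (k+1))) - fv e f k * v (intA Fam (NK e k)))
          = fv e f n * v (intA Fam (NK e n)) - fv e f 0 * v (intA Fam (NK e 0)) :=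
        Finset.sum_range_sub (fun k => fv e f k * v (intA Fam (NK e k))) n
      have h4 : ∑ k ∈ Finset.range n,
          (fv e f k * (v (intA Fam (NK e (k+1))) - v (intA Fam (NK e k)))
            - (fv e f k - fv e f (k+1)) * v (intA Fam (NK e (k+1)))) = 0 := by
        calc ∑ k ∈ Finset.range n,
            (fv e f k * (v (intA Fam (NK e (k+1))) - v (intA Fam (NK e k)))
              - (fv e f k - fv e f (k+1)) * v (intA Fam (NK e (k+1))))
            = ∑ k ∈ Finset.range n,
              (fv e f (k+1) * v (intA Fam (NK e (k+1))) - fv e f k * v (intA Fam (NK e k))) :=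
              Finset.sum_congr rfl fun k _ => by ring
          _ = 0 := by rw [h3, fv_top, h0]; ring
      have h5 : ∑ k ∈ Finset.range n,
          fv e f k * (v (intA Fam (NK e (k+1))) - v (intA Fam (NK e k)))
          - ∑ k ∈ Finset.range n, (fv e f k - fv e f (k+1)) * v (intA Fam (NK e (k+1))) = 0 := by
        rw [← Finset.sum_sub_distrib]
        exact h4
      linarith
    calc ∑ F ∈ Fam, y F * v F
        ≤ ∑ F ∈ Fam, y F * ∑ a ∈ F, x a :=
          Finset.sum_le_sum fun F hF => mul_le_mul_of_nonneg_left (hdf F hF) (hy0 F)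
      _ = ∑ F ∈ Fam, ∑ a : N, (if a ∈ F then y F * x a else 0) := by
          refine Finset.sum_congr rfl fun F _ => ?_
          rw [Finset.mul_sum, ← Finset.sum_filter]
          congr 1
          ext a
          simp
      _ = ∑ a : N, ∑ F ∈ Fam, (if a ∈ F then y F * x a else 0) := Finset.sum_comm
      _ = ∑ a : N, (∑ F ∈ Fam.filter (fun F => a ∈ F), y F) * x a := by
          refine Finset.sum_congr rfl fun a _ => ?_
          rw [Finset.sum_filter, Finset.sum_mul]
          refine Finset.sum_congr rfl fun F _ => ?_
          rw [ite_mul, zero_mul]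
      _ ≤ ∑ a : N, f a * x a :=
          Finset.sum_le_sum fun a _ => mul_le_mul_of_nonneg_right (hyc a) (hx0 a)
      _ = ∑ k ∈ Finset.range n,
            fv e f k * (v (intA Fam (NK e (k+1))) - v (intA Fam (NK e k))) := by
          rw [← Fin.sum_univ_eq_sum_range (fun k => fv e f k *
            (v (intA Fam (NK e (k+1))) - v (intA Fam (NK e k)))) n]
          refine (Fintype.sum_equiv e _ _ fun i => ?_).symm
          simp only [hx, Equiv.symm_apply_apply, fv_of_lt e f i.isLt, Fin.eta]
      _ = ∑ k ∈ Finset.range n,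
            (fv e f k - fv e f (k+1)) * v (intA Fam (NK e (k+1))) := habel
      _ = cho Fam hne β f := hsum

end Stmt18

/-- for a supermodular capacity v on a union-closed family, the Choquet
integral equals the optimal value of the packing LP, and hence is positively
homogeneous and superadditive on ℝ^N₊. -/
theorem stmt_18 {N : Type*} [Fintype N] [DecidableEq N]
    (Fam : Finset (Finset N)) (hne : ∀ F ∈ Fam, F.Nonempty)
    (hcov : ∀ x : N, ∃ F ∈ Fam, x ∈ F)
    (huc : ∀ F ∈ Fam, ∀ G ∈ Fam, F ∪ G ∈ Fam)
    (v : Finset N → ℝ) (hv0 : ∀ F ∈ Fam, 0 ≤ v F)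
    (hmono : ∀ F ∈ Fam, ∀ G ∈ Fam, F ⊆ G → v F ≤ v G)
    (hvempty : v ∅ = 0)
    (hsupmod : ∀ F ∈ Fam, ∀ G ∈ Fam,
        v F + v G ≤ v (F ∪ G) + v ((Fam.filter (fun H => H ⊆ F ∩ G)).sup id))
    (β : Finset N → ℝ)
    (hrep : ∀ G ∈ Fam, v G = ∑ F ∈ Fam.filter (fun F => F ⊆ G), β F) :
    (∀ f : N → ℝ, (∀ a, 0 ≤ f a) →
      IsGreatest {r : ℝ | ∃ y : Finset N → ℝ, (∀ F, 0 ≤ y F) ∧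
          (∀ a : N, (∑ F ∈ Fam.filter (fun F => a ∈ F), y F) ≤ f a) ∧
          r = ∑ F ∈ Fam, y F * v F}
        (cho Fam hne β f)) ∧
    (∀ f : N → ℝ, (∀ a, 0 ≤ f a) → ∀ c : ℝ, 0 ≤ c →
        cho Fam hne β (fun a => c * f a) = c * cho Fam hne β f) ∧
    (∀ f g : N → ℝ, (∀ a, 0 ≤ f a) → (∀ a, 0 ≤ g a) →
        cho Fam hne β f + cho Fam hne β g ≤ cho Fam hne β (f + g)) := by
  have hg : ∀ f : N → ℝ, (∀ a, 0 ≤ f a) →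
      IsGreatest {r : ℝ | ∃ y : Finset N → ℝ, (∀ F, 0 ≤ y F) ∧
          (∀ a : N, (∑ F ∈ Fam.filter (fun F => a ∈ F), y F) ≤ f a) ∧
          r = ∑ F ∈ Fam, y F * v F}
        (cho Fam hne β f) :=
    fun f hf => Stmt18.key Fam hne huc v hv0 hmono hvempty hsupmod β hrep f hf
  refine ⟨hg, ?_, ?_⟩
  · -- positive homogeneity
    intro f hf c hc
    rcases eq_or_lt_of_le hc with rfl | hc
    · -- c = 0
      have h0 : ∀ a, (0:ℝ) ≤ 0 * f a := fun a => by simp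
      obtain ⟨y, hy0, hyc, hval⟩ := (hg (fun a => 0 * f a) h0).1
      have hy : ∀ F ∈ Fam, y F = 0 := by
        intro F hF
        obtain ⟨a, ha⟩ := hne F hF
        have h1 : y F ≤ ∑ G ∈ Fam.filter (fun G => a ∈ G), y G :=
          Finset.single_le_sum (fun G _ => hy0 G) (Finset.mem_filter.2 ⟨hF, ha⟩)
        have h2 := hyc a
        have h3 := hy0 F
        simp only [zero_mul] at h2
        linarith
      rw [hval, Finset.sum_eq_zero (fun F hF => by rw [hy F hF, zero_mul]), zero_mul]
    · -- c > 0
      have hcf : ∀ a, 0 ≤ c * f a := fun a => mul_nonneg hc.le (hf a)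
      refine IsGreatest.unique (hg _ hcf) ⟨?_, ?_⟩
      · obtain ⟨y, hy0, hyc, hval⟩ := (hg f hf).1
        refine ⟨fun F => c * y F, fun F => mul_nonneg hc.le (hy0 F), fun a => ?_, ?_⟩
        · rw [← Finset.mul_sum]
          exact mul_le_mul_of_nonneg_left (hyc a) hc.le
        · rw [hval, Finset.mul_sum]
          exact Finset.sum_congr rfl fun F _ => by ring
      · rintro r ⟨y, hy0, hyc, rfl⟩
        have h1 : (∑ F ∈ Fam, y F * v F) / c ≤ cho Fam hne β f := by
          apply (hg f hf).2
          refine ⟨fun F => y F / c, fun F => div_nonneg (hy0 F) hc.le, fun a => ?_, ?_⟩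
          · rw [← Finset.sum_div, div_le_iff₀ hc]
            have := hyc a
            linarith [mul_comm (f a) c]
          · rw [Finset.sum_div]
            exact Finset.sum_congr rfl fun F _ => by ring
        calc (∑ F ∈ Fam, y F * v F) = c * ((∑ F ∈ Fam, y F * v F) / c) := by
              field_simp
          _ ≤ c * cho Fam hne β f := mul_le_mul_of_nonneg_left h1 hc.le
  · -- superadditivity
    intro f g hf hgp
    have hfg : ∀ a, 0 ≤ (f + g) a := fun a => add_nonneg (hf a) (hgp a)
    obtain ⟨y1, hy10, hy1c, hv1⟩ := (hg f hf).1
    obtain ⟨y2, hy20, hy2c, hv2⟩ := (hg g hgp).1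
    apply (hg (f + g) hfg).2
    refine ⟨fun F => y1 F + y2 F, fun F => add_nonneg (hy10 F) (hy20 F), fun a => ?_, ?_⟩
    · rw [Finset.sum_add_distrib]
      exact add_le_add (hy1c a) (hy2c a)
    · rw [hv1, hv2, ← Finset.sum_add_distrib]
      exact Finset.sum_congr rfl fun F _ => by ring
end
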